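/- arXiv:2203.13543 — 6 statements merged into one kernel-verified Lean document; each statement's English description precedes it below -/
import Mathlib

section
/- Let σ be a word of length n and π a word of length m, with σ and π disjoint. Then ∑_{α ∈ S(σ,π)} q^{maj(α)} = [n+m choose m]_q · q^{maj(σ)+maj(π)} as an identity of polynomials in q. -/
open Polynomial List

/-- The set of (1-indexed) descents of a word `w`: indices `i` with
`1 ≤ i ≤ length w - 1` and `w_i > w_{i+1}`. -/
def descents (w : List ℕ) : Finset ℕ :=
  (Finset.Ico 1 w.length).filter (fun i => w.getD i 0 < w.getD (i - 1) 0)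

/-- The number of descents of a word. -/
def des (w : List ℕ) : ℕ := (descents w).card

/-- The major index of a word: the sum of its descents. -/
def maj (w : List ℕ) : ℕ := ∑ i ∈ descents w, i

/-- `dge i w` is the number of descents of `w` that are `≥ i`. -/
def dge (i : ℕ) (w : List ℕ) : ℕ := ((descents w).filter (fun j => i ≤ j)).card

/-- `α` is a shuffle of the disjoint words `σ` and `π`. -/
def IsShuffle (σ π α : List ℕ) : Prop :=
  α.length = σ.length + π.length ∧ σ.Sublist α ∧ π.Sublist α

/-- `ins σ i r` is `σ^{(i)}(r)`, the word obtained by inserting `r`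
immediately before `σ_{i+1}` (after `σ_n` when `i = n`). -/
def ins (σ : List ℕ) (i r : ℕ) : List ℕ := σ.insertIdx i r

/-- The major increment `im(σ,i,r) = maj(σ^{(i)}(r)) - maj(σ)`. -/
def im (σ : List ℕ) (i r : ℕ) : ℤ := (maj (ins σ i r) : ℤ) - (maj σ : ℤ)

/-- The space `i` (for `0 ≤ i ≤ n`) is an RL-space of `σ` relative to `r`. -/
def IsRL (σ : List ℕ) (r i : ℕ) : Prop :=
  (i = σ.length ∧ ∀ x ∈ σ.getLast?, x < r) ∨
  (i = 0 ∧ ∀ x ∈ σ.head?, r < x) ∨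
  (0 < i ∧ i < σ.length ∧ r < σ.getD i 0 ∧ σ.getD i 0 < σ.getD (i - 1) 0) ∨
  (0 < i ∧ i < σ.length ∧ σ.getD i 0 < σ.getD (i - 1) 0 ∧ σ.getD (i - 1) 0 < r) ∨
  (0 < i ∧ i < σ.length ∧ σ.getD (i - 1) 0 < r ∧ r < σ.getD i 0)

/-- The Gaussian binomial coefficient `[N choose M]_q`, as a polynomial in `q`:
`∏_{j=1}^{M} (1 - q^{N-M+j}) / ∏_{j=1}^{M} (1 - q^{j})` when `0 ≤ M ≤ N`, and `0` otherwise. -/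
noncomputable def gauss (N M : ℤ) : Polynomial ℚ :=
  if 0 ≤ M ∧ M ≤ N then
    (∏ j ∈ Finset.Icc 1 M.toNat, (1 - (X : Polynomial ℚ) ^ (N - M + j).toNat)) /
      (∏ j ∈ Finset.Icc 1 M.toNat, (1 - (X : Polynomial ℚ) ^ (j : ℕ)))
  else 0

/-- `delPrefix α π i` is `α^{(i)}`: the word obtained from `α` by deleting
the letters `π₁, …, π_i`. -/
def delPrefix (α π : List ℕ) (i : ℕ) : List ℕ :=
  α.filter (fun x => !((π.take i).contains x))

namespace GG


/-- strict compatibility order on (value, letter) pairs -/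
def R (p q : ℕ × ℕ) : Prop := q.1 < p.1 ∨ (p.1 = q.1 ∧ p.2 < q.2)

/-- weak version -/
def Rle (p q : ℕ × ℕ) : Prop := q.1 < p.1 ∨ (p.1 = q.1 ∧ p.2 ≤ q.2)

instance : DecidablePred (fun p : (ℕ×ℕ) × (ℕ×ℕ) => R p.1 p.2) := fun _ => by
  unfold R; infer_instance

instance Rdec : ∀ p q, Decidable (R p q) := fun _ _ => by unfold R; infer_instance
instance Rledec : ∀ p q, Decidable (Rle p q) := fun _ _ => by unfold Rle; infer_instance

lemma R_trans {a b c} (h1 : R a b) (h2 : R b c) : R a c := by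
  unfold R at *; omega

instance : IsTrans (ℕ×ℕ) R := ⟨fun _ _ _ => R_trans⟩

lemma Rle_trans {a b c} (h1 : Rle a b) (h2 : Rle b c) : Rle a c := by
  unfold Rle at *; omega

lemma Rle_total (a b) : Rle a b ∨ Rle b a := by unfold Rle; omega

lemma R_of_Rle {a b} (h : Rle a b) (hne : a.2 ≠ b.2) : R a b := by
  unfold Rle at h; unfold R; omega

lemma Rle_of_R {a b} (h : R a b) : Rle a b := by unfold R at h; unfold Rle; omega

lemma R_asymm {a b} (h1 : R a b) (h2 : R b a) : False := by unfold R at *; omega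

instance : IsAntisymm (ℕ×ℕ) R := ⟨fun _ _ h1 h2 => absurd h1 (fun h => R_asymm h h2)⟩

/-- merge two lists by `Rle` -/
def mrg : List (ℕ×ℕ) → List (ℕ×ℕ) → List (ℕ×ℕ)
  | [], l => l
  | l, [] => l
  | p::l, q::t => if Rle p q then p :: mrg l (q::t) else q :: mrg (p::l) t
termination_by a b => a.length + b.length

lemma mrg_perm : ∀ a b, mrg a b ~ a ++ b := by
  intro a b
  induction a, b using mrg.induct with
  | case1 l => simp [mrg]
  | case2 l => cases l <;> simp [mrg]
  | case3 p l q t h ih =>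
      rw [mrg, if_pos h]
      exact (ih.cons p).trans (by simp)
  | case4 p l q t h ih =>
      rw [mrg, if_neg h]
      refine (ih.cons q).trans ?_
      have : q :: (p :: l ++ t) ~ p :: l ++ (q :: t) := by
        simpa using (List.perm_middle (a := q) (l₁ := p :: l) (l₂ := t)).symm
      exact this

lemma mrg_pairwise : ∀ a b, a.Pairwise Rle → b.Pairwise Rle → (mrg a b).Pairwise Rle := by
  intro a b ha hb
  induction a, b using mrg.induct with
  | case1 l => simpa [mrg] using hb
  | case2 l => cases l <;> simpa [mrg] using ha
  | case3 p l q t h ih =>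
      rw [mrg, if_pos h]
      rw [List.pairwise_cons] at ha hb ⊢
      refine ⟨?_, ih ha.2 (List.pairwise_cons.mpr hb)⟩
      intro z hz
      have hz' : z ∈ l ++ (q :: t) := (mrg_perm l (q::t)).mem_iff.mp hz
      rcases List.mem_append.mp hz' with h1 | h1
      · exact ha.1 z h1
      · rcases List.mem_cons.mp h1 with rfl | h2
        · exact h
        · exact Rle_trans h (hb.1 z h2)
  | case4 p l q t h ih =>
      rw [mrg, if_neg h]
      have hqp : Rle q p := (Rle_total p q).resolve_left h
      rw [List.pairwise_cons] at hb ⊢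
      refine ⟨?_, ih (by exact ha) hb.2⟩
      intro z hz
      have hz' : z ∈ (p :: l) ++ t := (mrg_perm (p::l) t).mem_iff.mp hz
      rcases List.mem_append.mp hz' with h1 | h1
      · rcases List.mem_cons.mp h1 with rfl | h2
        · exact hqp
        · exact Rle_trans hqp (List.pairwise_cons.mp ha |>.1 z h2)
      · exact hb.1 z h1



lemma mem_descents {w : List ℕ} {i : ℕ} :
    i ∈ descents w ↔ 1 ≤ i ∧ i < w.length ∧ w.getD i 0 < w.getD (i-1) 0 := by
  simp [descents, Finset.mem_filter, Finset.mem_Ico, and_assoc]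

lemma descents_nil : descents [] = ∅ := by
  simp [descents]

lemma descents_cons (x : ℕ) (w : List ℕ) :
    descents (x :: w) = ((descents w).image (· + 1)) ∪
      (if w.getD 0 0 < x ∧ w ≠ [] then {1} else ∅) := by
  ext i
  rw [mem_descents]
  simp only [Finset.mem_union, Finset.mem_image, mem_descents]
  constructor
  · rintro ⟨h1, h2, h3⟩
    rcases Nat.lt_or_ge i 2 with hi | hi
    · interval_cases i
      right
      have hw : w ≠ [] := by
        intro h; subst h; simpa using h2
      have hx : w.getD 0 0 < x := by simpa using h3
      rw [if_pos ⟨hx, hw⟩]; simp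
    · left
      obtain ⟨j, rfl⟩ : ∃ j, i = j + 1 := ⟨i - 1, by omega⟩
      refine ⟨j, ⟨by omega, by simpa using h2, ?_⟩, rfl⟩
      have e1 : (x :: w).getD (j+1) 0 = w.getD j 0 := List.getD_cons_succ ..
      have e2 : (x :: w).getD (j+1-1) 0 = w.getD (j-1) 0 := by
        obtain ⟨k, rfl⟩ : ∃ k, j = k + 1 := ⟨j - 1, by omega⟩
        simp [List.getD_cons_succ]
      rw [e1, e2] at h3; exact h3
  · rintro (⟨j, ⟨hj1, hj2, hj3⟩, rfl⟩ | h)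
    · refine ⟨by omega, by simp; omega, ?_⟩
      have e1 : (x :: w).getD (j+1) 0 = w.getD j 0 := List.getD_cons_succ ..
      have e2 : (x :: w).getD (j+1-1) 0 = w.getD (j-1) 0 := by
        obtain ⟨k, rfl⟩ : ∃ k, j = k + 1 := ⟨j - 1, by omega⟩
        simp [List.getD_cons_succ]
      rw [e1, e2]; exact hj3
    · split_ifs at h with hc
      · simp only [Finset.mem_singleton] at h; subst h
        rcases hc with ⟨hlt, hne⟩
        refine ⟨le_refl _, by simpa using List.length_pos_iff.mpr hne, ?_⟩
        simpa using hlt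
      · simp at h

lemma zero_not_mem_descents (w : List ℕ) : (0:ℕ) ∉ descents w := by
  intro h; have := mem_descents.mp h; omega

lemma one_not_mem_image {w : List ℕ} : (1:ℕ) ∉ (descents w).image (· + 1) := by
  intro h
  simp only [Finset.mem_image] at h
  obtain ⟨j, hj, e⟩ := h
  have := mem_descents.mp hj
  omega

lemma des_cons (x : ℕ) (w : List ℕ) :
    des (x :: w) = des w + (if w.getD 0 0 < x ∧ w ≠ [] then 1 else 0) := by
  rw [des, descents_cons]
  split_ifs with h
  · rw [Finset.card_union_of_disjoint (by simpa [Finset.disjoint_singleton_right] using one_not_mem_image (w := w)),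
      Finset.card_image_of_injective _ (add_left_injective 1)]
    simp [des]
  · simp [des, Finset.card_image_of_injective _ (add_left_injective 1)]

lemma maj_cons (x : ℕ) (w : List ℕ) :
    maj (x :: w) = maj w + des w + (if w.getD 0 0 < x ∧ w ≠ [] then 1 else 0) := by
  rw [maj, descents_cons]
  split_ifs with h
  · rw [Finset.sum_union (by simpa [Finset.disjoint_singleton_right] using one_not_mem_image (w := w)),
      Finset.sum_image (by intro a _ b _ h; simpa using h)]
    simp [maj, des, Finset.sum_add_distrib]
  · rw [Finset.union_empty, Finset.sum_image (by intro a _ b _ h; simpa using h)]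
    simp [maj, des, Finset.sum_add_distrib]

lemma des_le (w : List ℕ) : des w ≤ w.length := by
  calc des w ≤ (Finset.Ico 1 w.length).card := Finset.card_le_card (Finset.filter_subset _ _)
    _ ≤ w.length := by simp

lemma maj_le (w : List ℕ) : maj w ≤ w.length * w.length := by
  calc maj w ≤ ∑ i ∈ Finset.Ico 1 w.length, i :=
        Finset.sum_le_sum_of_subset (Finset.filter_subset _ _)
    _ ≤ ∑ _i ∈ Finset.Ico 1 w.length, w.length := by
        apply Finset.sum_le_sum; intro i hi; exact le_of_lt (Finset.mem_Ico.mp hi).2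
    _ ≤ w.length * w.length := by
        simp only [Finset.sum_const, smul_eq_mul, Nat.card_Ico]
        exact Nat.mul_le_mul_right _ (Nat.sub_le _ _)



/-- generating polynomial of partitions in an `N × C` box -/
noncomputable def PN : ℕ → ℕ → Polynomial ℚ
  | 0, _ => 1
  | _+1, 0 => 1
  | N+1, C+1 => PN (N+1) C + X ^ (C+1) * PN N (C+1)
termination_by N C => N + C

lemma PN_zero_left (C : ℕ) : PN 0 C = 1 := by rw [PN]
lemma PN_succ_zero (N : ℕ) : PN (N+1) 0 = 1 := by rw [PN]
lemma PN_succ_succ (N C : ℕ) : PN (N+1) (C+1) = PN (N+1) C + X ^ (C+1) * PN N (C+1) := by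
  rw [PN]

lemma PN_zero (N : ℕ) : PN N 0 = 1 := by
  cases N
  · exact PN_zero_left 0
  · exact PN_succ_zero _

/-- `PN` with an integer second argument, zero when negative. -/
noncomputable def PZ (N : ℕ) (C : ℤ) : Polynomial ℚ :=
  if 0 ≤ C then PN N C.toNat else 0

lemma PZ_nonneg {N : ℕ} {C : ℤ} (h : 0 ≤ C) : PZ N C = PN N C.toNat := if_pos h
lemma PZ_neg {N : ℕ} {C : ℤ} (h : C < 0) : PZ N C = 0 := if_neg (by omega)
lemma PZ_zero_arg (N : ℕ) : PZ N 0 = 1 := by rw [PZ_nonneg le_rfl]; exact PN_zero N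
lemma PZ_zero_left {C : ℤ} (h : 0 ≤ C) : PZ 0 C = 1 := by rw [PZ_nonneg h]; exact PN_zero_left _

/-- the Pascal-type recursion, valid for all integers C ≥ 0 and N ≥ 1 -/
lemma PZ_rec (N : ℕ) {C : ℤ} (h : 0 ≤ C) :
    PZ (N+1) C = PZ (N+1) (C-1) + X ^ C.toNat * PZ N C := by
  rcases eq_or_lt_of_le h with h0 | h0
  · rw [← h0]
    rw [PZ_zero_arg, PZ_neg (by omega), PZ_zero_arg]
    simp
  · obtain ⟨c, rfl⟩ : ∃ c : ℕ, C = (c : ℤ) + 1 := ⟨(C - 1).toNat, by omega⟩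
    rw [PZ_nonneg h, PZ_nonneg (by omega), PZ_nonneg h]
    have e1 : ((c : ℤ) + 1).toNat = c + 1 := by omega
    have e2 : ((c : ℤ) + 1 - 1).toNat = c := by omega
    rw [e1, e2]
    exact PN_succ_succ N c

lemma PN_prod (N C : ℕ) :
    PN N C * ∏ j ∈ Finset.range N, (1 - X ^ (j+1)) =
      ∏ j ∈ Finset.range N, (1 - (X : Polynomial ℚ) ^ (C + j + 1)) := by
  induction N generalizing C with
  | zero => simp [PN_zero_left]
  | succ N ih =>
    induction C with
    | zero => simp [PN_zero]
    | succ C ihC =>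
      have e1 : ∏ j ∈ Finset.range (N+1), (1 - (X:Polynomial ℚ)^(C + j + 1))
          = (1 - X ^ (C+1)) * ∏ j ∈ Finset.range N, (1 - (X:Polynomial ℚ) ^ (C + 1 + j + 1)) := by
        rw [Finset.prod_range_succ' (fun j => 1 - (X:Polynomial ℚ)^(C + j + 1))]
        rw [mul_comm]
        have : ∀ j:ℕ, C + (j+1) + 1 = C + 1 + j + 1 := by omega
        simp only [this]
      have e2 : ∏ j ∈ Finset.range (N+1), (1 - (X:Polynomial ℚ) ^ (C + 1 + j + 1))
          = (∏ j ∈ Finset.range N, (1 - (X:Polynomial ℚ) ^ (C + 1 + j + 1))) * (1 - X ^ (C + 1 + N + 1)) :=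
        Finset.prod_range_succ _ _
      rw [PN_succ_succ, add_mul, ihC, e1, e2, Finset.prod_range_succ]
      linear_combination (X^(C+1) * (1 - (X:Polynomial ℚ)^(N+1))) * ih (C+1)

/-- degree bound -/
lemma PN_natDegree_le (N C : ℕ) : (PN N C).natDegree ≤ N * C := by
  induction N generalizing C with
  | zero => simp [PN_zero_left]
  | succ N ih =>
    induction C with
    | zero => simp [PN_zero]
    | succ C ihC =>
      rw [PN_succ_succ]
      apply le_trans (Polynomial.natDegree_add_le _ _)
      apply max_le
      · exact le_trans ihC (by nlinarith)
      · apply le_trans (Polynomial.natDegree_mul_le)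
        have h1 := Polynomial.natDegree_X_pow (R := ℚ) (C+1)
        rw [h1]
        have := ih (C+1)
        nlinarith




def allLists : ℕ → ℕ → Finset (List ℕ)
  | 0, _ => {[]}
  | N+1, B => (Finset.range (B+1)).biUnion (fun a => (allLists N B).image (a :: ·))

lemma mem_allLists {N B : ℕ} {v : List ℕ} :
    v ∈ allLists N B ↔ v.length = N ∧ ∀ x ∈ v, x ≤ B := by
  induction N generalizing v with
  | zero =>
    simp only [allLists, Finset.mem_singleton]
    constructor
    · rintro rfl; simp
    · rintro ⟨h, -⟩; exact List.length_eq_zero_iff.mp h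
  | succ N ih =>
    simp only [allLists, Finset.mem_biUnion, Finset.mem_image, Finset.mem_range]
    constructor
    · rintro ⟨a, ha, v', hv', rfl⟩
      obtain ⟨h1, h2⟩ := ih.mp hv'
      refine ⟨by simp [h1], ?_⟩
      intro z hz
      rcases List.mem_cons.mp hz with rfl | hz
      · omega
      · exact h2 z hz
    · rintro ⟨h1, h2⟩
      cases v with
      | nil => simp at h1
      | cons a v' =>
        refine ⟨a, by have := h2 a (by simp); omega, v', ih.mpr ⟨by simpa using h1, ?_⟩, rfl⟩
        intro z hz; exact h2 z (by simp [hz])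

/-- the compatible-labelings Finset -/
def Fset (w : List ℕ) (B : ℕ) : Finset (List ℕ) :=
  (allLists w.length B).filter (fun v => IsChain R (v.zip w))

lemma mem_Fset {w : List ℕ} {B : ℕ} {v : List ℕ} :
    v ∈ Fset w B ↔ v.length = w.length ∧ (∀ x ∈ v, x ≤ B) ∧ IsChain R (v.zip w) := by
  simp [Fset, Finset.mem_filter, mem_allLists, and_assoc]

lemma chain_fst {v w : List ℕ} (hlen : v.length ≤ w.length) (h : IsChain R (v.zip w)) :
    IsChain (fun p q : ℕ => q ≤ p) v := by
  have := List.isChain_map_of_isChain (R := R) (S := fun p q : ℕ => q ≤ p) Prod.fst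
    (fun a b hab => by unfold R at hab; omega) h
  rwa [List.map_fst_zip hlen] at this

lemma le_head_of_chain {a : ℕ} {v : List ℕ} (h : IsChain (fun p q : ℕ => q ≤ p) (a :: v)) :
    ∀ z ∈ v, z ≤ a := by
  have : IsTrans ℕ (fun p q : ℕ => q ≤ p) := ⟨fun _ _ _ h1 h2 => le_trans h2 h1⟩
  have hp := List.isChain_iff_pairwise.mp h
  exact (List.pairwise_cons.mp hp).1

/-- the case structure at the head of a nodup word -/
def HeadCase (x : ℕ) (w' : List ℕ) (d1 : ℕ) : Prop :=
  (d1 = 0 ∧ (w' = [] ∨ ∃ y t, w' = y :: t ∧ x < y)) ∨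
  (d1 = 1 ∧ ∃ y t, w' = y :: t ∧ y < x)

lemma headcase_exists (x : ℕ) (w' : List ℕ) (hx : x ∉ w') :
    ∃ d1, HeadCase x w' d1 ∧ d1 ≤ 1 ∧
      des (x :: w') = des w' + d1 ∧ maj (x :: w') = maj w' + des w' + d1 := by
  cases w' with
  | nil =>
    refine ⟨0, Or.inl ⟨rfl, Or.inl rfl⟩, by omega, ?_, ?_⟩
    · rw [des_cons]; simp
    · rw [maj_cons]; simp
  | cons y t =>
    have hxy : x ≠ y := fun h => hx (h ▸ (List.mem_cons_self : y ∈ y :: t))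
    rcases Nat.lt_or_ge y x with h | h
    · refine ⟨1, Or.inr ⟨rfl, y, t, rfl, h⟩, by omega, ?_, ?_⟩
      · rw [des_cons, if_pos ⟨by simpa using h, by simp⟩]
      · rw [maj_cons, if_pos ⟨by simpa using h, by simp⟩]
    · have hlt : x < y := by omega
      refine ⟨0, Or.inl ⟨rfl, Or.inr ⟨y, t, rfl, hlt⟩⟩, by omega, ?_, ?_⟩
      · rw [des_cons, if_neg (by simp; omega)]
      · rw [maj_cons, if_neg (by simp; omega)]

/-- Claim 2: the slice with head value exactly B -/
lemma filter_head_eq (x : ℕ) (w' : List ℕ) (B d1 : ℕ) (hBd1 : d1 ≤ B)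
    (hcase : HeadCase x w' d1) :
    (Fset (x :: w') B).filter (fun v => v.getD 0 0 = B) =
      (Fset w' (B - d1)).image (B :: ·) := by
  ext v
  simp only [Finset.mem_filter, Finset.mem_image]
  constructor
  · rintro ⟨hv, hhead⟩
    obtain ⟨hlen, hbd, hch⟩ := mem_Fset.mp hv
    obtain ⟨v', rfl⟩ : ∃ v', v = B :: v' := by
      cases v with
      | nil => simp at hlen
      | cons a v' =>
        have ha : a = B := by simpa using hhead
        exact ⟨v', by rw [ha]⟩
    refine ⟨v', mem_Fset.mpr ⟨by simpa using hlen, ?_, hch.tail⟩, rfl⟩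
    intro z hz
    rcases hcase with ⟨hd0, -⟩ | ⟨hd1, y, t, hw', hyx⟩
    · subst hd0
      rw [Nat.sub_zero]
      exact hbd z (by simp [hz])
    · subst hd1
      subst hw'
      obtain ⟨b, v'', rfl⟩ : ∃ b v'', v' = b :: v'' := by
        cases v' with
        | nil => simp at hlen
        | cons b v'' => exact ⟨b, v'', rfl⟩
      have hrel : R (B, x) (b, y) := by
        have := hch.rel_head
        simpa using this
      have hbB : b < B := by
        unfold R at hrel
        simp only at hrel
        omega
      have hchain' : IsChain (fun p q : ℕ => q ≤ p) (b :: v'') :=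
        chain_fst (w := y :: t) (by simp at hlen ⊢; omega) hch.tail
      rcases List.mem_cons.mp hz with rfl | hz'
      · omega
      · have := le_head_of_chain hchain' z hz'
        omega
  · rintro ⟨v', hv', rfl⟩
    obtain ⟨hlen, hbd, hch⟩ := mem_Fset.mp hv'
    refine ⟨mem_Fset.mpr ⟨by simpa using hlen, ?_, ?_⟩, by simp⟩
    · intro z hz
      rcases List.mem_cons.mp hz with rfl | hz'
      · omega
      · have := hbd z hz'; omega
    · rw [List.zip_cons_cons]
      cases hv'' : v' with
      | nil =>
        have : w' = [] := List.length_eq_zero_iff.mp (by rw [← hlen, hv'']; rfl)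
        subst this
        simp
      | cons b v'' =>
        subst hv''
        rcases hcase with ⟨hd0, hw0⟩ | ⟨hd1, y, t, hw', hyx⟩
        · rcases hw0 with rfl | ⟨y, t, rfl, hxy⟩
          · simp at hlen
          · rw [List.zip_cons_cons]
            refine List.IsChain.cons_cons ?_ hch
            have hbB : b ≤ B := by
              have := hbd b (by simp)
              omega
            rcases Nat.lt_or_ge b B with h | h
            · left; simpa using h
            · right
              refine ⟨by simp; omega, by simpa using hxy⟩
        · subst hw'
          rw [List.zip_cons_cons]
          refine List.IsChain.cons_cons ?_ hch
          have hbB : b ≤ B - 1 := by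
            have := hbd b (by simp)
            omega
          left
          simp
          omega

/-- Claim 1: the slice with head value < B -/
lemma filter_head_ne (x : ℕ) (w' : List ℕ) (B' : ℕ) :
    (Fset (x :: w') (B'+1)).filter (fun v => ¬ v.getD 0 0 = B'+1) =
      Fset (x :: w') B' := by
  ext v
  simp only [Finset.mem_filter]
  constructor
  · rintro ⟨hv, hhead⟩
    obtain ⟨hlen, hbd, hch⟩ := mem_Fset.mp hv
    obtain ⟨a, v', rfl⟩ : ∃ a v', v = a :: v' := by
      cases v with
      | nil => simp at hlen
      | cons a v' => exact ⟨a, v', rfl⟩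
    have haB : a ≤ B' := by
      have := hbd a (by simp)
      simp only [List.getD_cons_zero] at hhead
      omega
    refine mem_Fset.mpr ⟨hlen, ?_, hch⟩
    intro z hz
    rcases List.mem_cons.mp hz with rfl | hz'
    · exact haB
    · have hchain' : IsChain (fun p q : ℕ => q ≤ p) (a :: v') :=
        chain_fst (w := x :: w') (by omega) hch
      have := le_head_of_chain hchain' z hz'
      omega
  · intro hv
    obtain ⟨hlen, hbd, hch⟩ := mem_Fset.mp hv
    refine ⟨mem_Fset.mpr ⟨hlen, fun z hz => by have := hbd z hz; omega, hch⟩, ?_⟩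
    obtain ⟨a, v', rfl⟩ : ∃ a v', v = a :: v' := by
      cases v with
      | nil => simp at hlen
      | cons a v' => exact ⟨a, v', rfl⟩
    have := hbd a (by simp)
    simp
    omega

/-- the empty case: descent at the head but B = 0 -/
lemma Fset_empty_case (x y : ℕ) (t : List ℕ) (hyx : y < x) :
    Fset (x :: y :: t) 0 = ∅ := by
  ext v
  simp only [Finset.notMem_empty, iff_false]
  intro hv
  obtain ⟨hlen, hbd, hch⟩ := mem_Fset.mp hv
  obtain ⟨a, b, v'', rfl⟩ : ∃ a b v'', v = a :: b :: v'' := by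
    cases v with
    | nil => simp at hlen
    | cons a v2 =>
      cases v2 with
      | nil => simp at hlen
      | cons b v'' => exact ⟨a, b, v'', rfl⟩
  have ha : a = 0 := by have := hbd a (by simp); omega
  have hb : b = 0 := by have := hbd b (by simp); omega
  subst ha; subst hb
  have := hch.rel_head
  unfold R at this
  simp at this
  omega

/-- Lemma A: the fundamental lemma of compatible labelings -/
lemma sumFset : ∀ (k : ℕ) (w : List ℕ) (B : ℕ), w.length + B ≤ k → w.Nodup →
    ∑ v ∈ Fset w B, (X:Polynomial ℚ) ^ v.sum = X ^ maj w * PZ w.length ((B:ℤ) - des w) := by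
  intro k
  induction k with
  | zero =>
    intro w B hk _
    have hw : w = [] := List.length_eq_zero_iff.mp (by omega)
    have hB : B = 0 := by omega
    subst hw; subst hB
    have : Fset [] 0 = {[]} := by
      ext v; simp [mem_Fset, List.length_eq_zero_iff]
      rintro rfl; simp
    rw [this]
    simp [maj, des, descents, PZ_zero_arg]
  | succ k ihk =>
    intro w B hk hnd
    cases w with
    | nil =>
      have : Fset [] B = {[]} := by
        ext v; simp [mem_Fset, List.length_eq_zero_iff]
        rintro rfl; simp
      rw [this]
      simp [maj, des, descents]
      rw [PZ_zero_left (by omega)]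
    | cons x w' =>
      have hxw' : x ∉ w' := (List.nodup_cons.mp hnd).1
      have hnd' : w'.Nodup := (List.nodup_cons.mp hnd).2
      obtain ⟨d1, hcase, hd1le, hdes, hmaj⟩ := headcase_exists x w' hxw'
      by_cases hCimp : d1 = 1 ∧ B = 0
      · obtain ⟨hd, rfl⟩ := hCimp
        rcases hcase with ⟨h0, -⟩ | ⟨-, y, t, rfl, hyx⟩
        · omega
        · rw [Fset_empty_case x y t hyx]
          have : ((0:ℕ) : ℤ) - des (x :: y :: t) < 0 := by
            rw [hdes, hd]; push_cast; omega
          rw [PZ_neg this]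
          simp
      · have hBd1 : d1 ≤ B := by
          rcases Nat.eq_zero_or_pos B with rfl | h2
          · have : ¬ d1 = 1 := fun h => hCimp ⟨h, rfl⟩
            omega
          · omega
        have hsplit := Finset.sum_filter_add_sum_filter_not (Fset (x :: w') B)
          (fun v => v.getD 0 0 = B) (fun v => (X:Polynomial ℚ) ^ v.sum)
        rw [← hsplit, filter_head_eq x w' B d1 hBd1 hcase,
          Finset.sum_image (by intro a _ b _ h; simpa using h)]
        have himage : ∑ v' ∈ Fset w' (B - d1), (X:Polynomial ℚ) ^ (B :: v').sum
            = X ^ B * ∑ v' ∈ Fset w' (B - d1), (X:Polynomial ℚ) ^ v'.sum := by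
          rw [Finset.mul_sum]
          exact Finset.sum_congr rfl (fun v' _ => by rw [List.sum_cons, pow_add])
        rw [himage, ihk w' (B - d1) (by simp at hk; omega) hnd']
        rcases Nat.eq_zero_or_pos B with rfl | hBpos
        · -- B = 0, d1 = 0
          have hd0 : d1 = 0 := by omega
          have hempty : (Fset (x :: w') 0).filter (fun v => ¬ v.getD 0 0 = 0) = ∅ := by
            ext v
            simp only [Finset.mem_filter, Finset.notMem_empty, iff_false, not_and]
            intro hv
            obtain ⟨hlen, hbd, -⟩ := mem_Fset.mp hv
            obtain ⟨a, v', rfl⟩ : ∃ a v', v = a :: v' := by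
              cases v with
              | nil => simp at hlen
              | cons a v' => exact ⟨a, v', rfl⟩
            have := hbd a (by simp)
            simp
            omega
          rw [hempty]
          simp only [Finset.sum_empty, add_zero, hd0, Nat.sub_zero]
          rw [hmaj, hdes, hd0]
          rcases Nat.eq_zero_or_pos (des w') with hz | hz
          · rw [hz]
            norm_num [PZ_zero_arg]
          · rw [PZ_neg (by push_cast; omega), PZ_neg (by push_cast; omega)]
            simp
        · -- B ≥ 1
          obtain ⟨B', rfl⟩ : ∃ B', B = B' + 1 := ⟨B - 1, by omega⟩
          rw [filter_head_ne x w' B', ihk (x :: w') B' (by simp at hk ⊢; omega) hnd]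
          rw [hmaj, hdes]
          simp only [List.length_cons]
          set C : ℤ := (B' : ℤ) + 1 - ((des w' : ℤ) + (d1 : ℤ)) with hCdef
          have harg1 : ((B' : ℤ)) - ((des w' + d1 : ℕ) : ℤ) = C - 1 := by push_cast; omega
          have harg2 : (((B' + 1 - d1 : ℕ)) : ℤ) - (des w' : ℤ) = C := by push_cast [hBd1]; omega
          have harg3 : (((B' + 1 : ℕ)) : ℤ) - ((des w' + d1 : ℕ) : ℤ) = C := by push_cast; omega
          rw [harg2, harg1, harg3]
          rcases Int.lt_or_le C 0 with hneg | hpos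
          · rw [PZ_neg hneg, PZ_neg (by omega), PZ_neg hneg]
            simp
          · have hrec := PZ_rec w'.length (C := C) hpos
            have hdesle : des w' + d1 ≤ B' + 1 := by omega
            have hCnat : C.toNat = B' + 1 - (des w' + d1) := by omega
            set e : ℕ := C.toNat with he
            set m : ℕ := maj w' + des w' + d1 with hm
            have hme : m + e = B' + 1 + maj w' := by omega
            calc X ^ (B'+1) * (X ^ maj w' * PZ w'.length C) + X ^ m * PZ (w'.length+1) (C-1)
                = X ^ (B'+1+maj w') * PZ w'.length C + X ^ m * PZ (w'.length+1) (C-1) := by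
                  rw [← mul_assoc, ← pow_add]
              _ = X ^ (m + e) * PZ w'.length C + X ^ m * PZ (w'.length+1) (C-1) := by rw [hme]
              _ = X ^ m * (PZ (w'.length+1) (C-1) + X ^ e * PZ w'.length C) := by
                  rw [pow_add, mul_assoc]; ring
              _ = X ^ m * PZ (w'.length+1) C := by rw [← hrec]




/- ### shuffle facts -/

lemma shuffle_perm {σ π α : List ℕ} (h : IsShuffle σ π α) (hdisj : σ.Disjoint π) :
    α ~ σ ++ π := by
  obtain ⟨hlen, hσ, hπ⟩ := h
  have hsub : (σ ++ π) <+~ α := by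
    rw [List.subperm_ext_iff]
    intro a ha
    rw [List.count_append]
    rcases List.mem_append.mp ha with h1 | h1
    · have : List.count a π = 0 := List.count_eq_zero.mpr (fun hc => hdisj h1 hc)
      rw [this, add_zero]
      exact hσ.count_le a
    · have : List.count a σ = 0 := List.count_eq_zero.mpr (fun hc => hdisj hc h1)
      rw [this, zero_add]
      exact hπ.count_le a
  exact ((hsub.perm_of_length_le (by simp [hlen]))).symm

lemma zip_fst_snd (l : List (ℕ×ℕ)) : (l.map Prod.fst).zip (l.map Prod.snd) = l := by
  have := List.zip_unzip l
  rwa [List.unzip_eq_map] at this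

lemma filter_mem_sublist {σ α : List ℕ} (h : σ <+ α) (hnd : α.Nodup) :
    α.filter (fun z => z ∈ σ) = σ := by
  induction h with
  | slnil => rfl
  | @cons σ' α' a h ih =>
    have hnd' : α'.Nodup := (List.nodup_cons.mp hnd).2
    have haα : a ∉ α' := (List.nodup_cons.mp hnd).1
    have haσ : a ∉ σ' := fun hc => haα (h.subset hc)
    rw [List.filter_cons, if_neg (by simpa using haσ)]
    exact ih hnd'
  | @cons_cons σ' α' a h ih =>
    have hnd' : α'.Nodup := (List.nodup_cons.mp hnd).2
    have haα : a ∉ α' := (List.nodup_cons.mp hnd).1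
    rw [List.filter_cons, if_pos (by simp)]
    congr 1
    rw [List.filter_congr (q := fun z => z ∈ σ') ?_]
    · exact ih hnd'
    · intro z hz
      have : z ≠ a := fun hc => haα (hc ▸ hz)
      simp [this]

/-- facts about the split components -/
lemma split_facts {α v τ : List ℕ} {B : ℕ} (hlen : v.length = α.length)
    (hbd : ∀ x ∈ v, x ≤ B) (hch : IsChain R (v.zip α)) (hτ : τ <+ α) (hαnd : α.Nodup) :
    (((v.zip α).filter (fun z => z.2 ∈ τ)).map Prod.snd) = τ ∧
    (((v.zip α).filter (fun z => z.2 ∈ τ)).map Prod.fst) ∈ Fset τ B := by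
  set L := v.zip α with hLdef
  set Lτ := L.filter (fun z => z.2 ∈ τ) with hLτ
  have hmapsnd : Lτ.map Prod.snd = τ := by
    rw [hLτ, show (fun z : ℕ×ℕ => (z.2 ∈ τ : Bool)) = ((fun z => (z ∈ τ : Bool)) ∘ Prod.snd) from rfl,
      ← List.filter_map, hLdef, List.map_snd_zip hlen.ge]
    exact filter_mem_sublist hτ hαnd
  refine ⟨hmapsnd, mem_Fset.mpr ⟨?_, ?_, ?_⟩⟩
  · rw [← hmapsnd]
    simp
  · intro z hz
    obtain ⟨pz, hpz, rfl⟩ := List.mem_map.mp hz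
    have hmem : pz ∈ L := List.mem_of_mem_filter hpz
    apply hbd
    have : pz.1 ∈ L.map Prod.fst := List.mem_map_of_mem (f := Prod.fst) hmem
    rwa [hLdef, List.map_fst_zip hlen.le] at this
  · have hzipback : ((Lτ.map Prod.fst).zip τ) = Lτ := by
      conv_lhs => rw [← hmapsnd]
      exact zip_fst_snd Lτ
    rw [hzipback]
    apply List.Pairwise.isChain
    exact ((List.isChain_iff_pairwise.mp hch).sublist (List.filter_sublist (l := L)))

/-- facts about the merge -/
lemma merge_facts {σ π g h : List ℕ} {B : ℕ} (hσπnd : (σ ++ π).Nodup)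
    (hg : g ∈ Fset σ B) (hh : h ∈ Fset π B) :
    (mrg (g.zip σ) (h.zip π)) ~ (g.zip σ) ++ (h.zip π) ∧
    (mrg (g.zip σ) (h.zip π)).Pairwise R ∧
    (mrg (g.zip σ) (h.zip π)).map Prod.snd ~ σ ++ π := by
  obtain ⟨hgl, hgb, hgc⟩ := mem_Fset.mp hg
  obtain ⟨hhl, hhb, hhc⟩ := mem_Fset.mp hh
  set M := mrg (g.zip σ) (h.zip π) with hM
  have h1 : M ~ (g.zip σ) ++ (h.zip π) := mrg_perm _ _
  have h3 : M.map Prod.snd ~ σ ++ π := by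
    refine (h1.map Prod.snd).trans ?_
    rw [List.map_append, List.map_snd_zip hgl.ge, List.map_snd_zip hhl.ge]
  have hle : M.Pairwise Rle := by
    apply mrg_pairwise
    · exact (List.isChain_iff_pairwise.mp hgc).imp Rle_of_R
    · exact (List.isChain_iff_pairwise.mp hhc).imp Rle_of_R
  have hsndnd : (M.map Prod.snd).Nodup := h3.nodup_iff.mpr hσπnd
  have hnesnd : M.Pairwise (fun a b => a.2 ≠ b.2) := List.pairwise_map.mp hsndnd
  have h2 : M.Pairwise R := by
    have := hle.and hnesnd
    exact this.imp (fun hab => R_of_Rle hab.1 hab.2)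
  exact ⟨h1, h2, h3⟩

/-- the roundtrip filter identity -/
lemma filter_merge {σ π g h : List ℕ} {B : ℕ} (hσπnd : (σ ++ π).Nodup)
    (hdisj : σ.Disjoint π)
    (hg : g ∈ Fset σ B) (hh : h ∈ Fset π B) :
    (mrg (g.zip σ) (h.zip π)).filter (fun z => z.2 ∈ σ) = g.zip σ ∧
    (mrg (g.zip σ) (h.zip π)).filter (fun z => z.2 ∈ π) = h.zip π := by
  obtain ⟨hgl, hgb, hgc⟩ := mem_Fset.mp hg
  obtain ⟨hhl, hhb, hhc⟩ := mem_Fset.mp hh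
  obtain ⟨h1, h2, h3⟩ := merge_facts hσπnd hg hh
  set M := mrg (g.zip σ) (h.zip π) with hM
  have hgs : ∀ z ∈ g.zip σ, z.2 ∈ σ := by
    intro z hz
    have : z.2 ∈ (g.zip σ).map Prod.snd := List.mem_map_of_mem (f := Prod.snd) hz
    rwa [List.map_snd_zip hgl.ge] at this
  have hhs : ∀ z ∈ h.zip π, z.2 ∈ π := by
    intro z hz
    have : z.2 ∈ (h.zip π).map Prod.snd := List.mem_map_of_mem (f := Prod.snd) hz
    rwa [List.map_snd_zip hhl.ge] at this
  constructor
  · refine (fun hp h1 h2 => List.Perm.eq_of_pairwise' (r := R) h1 h2 hp) ?_ ?_ ?_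
    · refine (h1.filter _).trans ?_
      rw [List.filter_append]
      rw [List.filter_eq_self.mpr (fun z hz => by simpa using hgs z hz)]
      rw [List.filter_eq_nil_iff.mpr (fun z hz => by simpa using fun hc => hdisj hc (hhs z hz))]
      rw [List.append_nil]
    · exact (h2.sublist (List.filter_sublist (l := M)))
    · exact List.isChain_iff_pairwise.mp hgc
  · refine (fun hp h1 h2 => List.Perm.eq_of_pairwise' (r := R) h1 h2 hp) ?_ ?_ ?_
    · refine (h1.filter _).trans ?_
      rw [List.filter_append]
      rw [List.filter_eq_nil_iff.mpr (fun z hz => by simpa using fun hc => hdisj (hgs z hz) hc)]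
      rw [List.filter_eq_self.mpr (fun z hz => by simpa using hhs z hz)]
      rw [List.nil_append]
    · exact (h2.sublist (List.filter_sublist (l := M)))
    · exact List.isChain_iff_pairwise.mp hhc

/- ### Lemma B -/

theorem lemmaB (σ π : List ℕ) (hσnd : σ.Nodup) (hπnd : π.Nodup) (hdisj : σ.Disjoint π)
    (S : Finset (List ℕ)) (hS : ∀ α, α ∈ S ↔ IsShuffle σ π α) (B : ℕ) :
    ∑ α ∈ S, ∑ v ∈ Fset α B, (X:Polynomial ℚ) ^ v.sum
      = (∑ v ∈ Fset σ B, (X:Polynomial ℚ) ^ v.sum) * (∑ v ∈ Fset π B, (X:Polynomial ℚ) ^ v.sum) := by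
  have hσπnd : (σ ++ π).Nodup := List.nodup_append'.mpr ⟨hσnd, hπnd, hdisj⟩
  rw [Finset.sum_sigma' S (fun α => Fset α B) (fun α v => (X:Polynomial ℚ) ^ v.sum)]
  rw [Finset.sum_mul_sum]
  rw [← Finset.sum_product' (s := Fset σ B) (t := Fset π B)
    (f := fun g h => (X:Polynomial ℚ) ^ g.sum * (X:Polynomial ℚ) ^ h.sum)]
  apply Finset.sum_nbij'
    (i := fun p => (((p.2.zip p.1).filter (fun z => z.2 ∈ σ)).map Prod.fst,
                    ((p.2.zip p.1).filter (fun z => z.2 ∈ π)).map Prod.fst))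
    (j := fun q => ⟨(mrg (q.1.zip σ) (q.2.zip π)).map Prod.snd,
                    (mrg (q.1.zip σ) (q.2.zip π)).map Prod.fst⟩)
  case hi =>
    rintro ⟨α, v⟩ hp
    rw [Finset.mem_sigma] at hp
    obtain ⟨hα, hv⟩ := hp
    dsimp only at hα hv ⊢
    have hsh := (hS α).mp hα
    have hαnd : α.Nodup := (shuffle_perm hsh hdisj).nodup_iff.mpr hσπnd
    obtain ⟨hlen, hbd, hch⟩ := mem_Fset.mp hv
    rw [Finset.mem_product]
    exact ⟨(split_facts hlen hbd hch hsh.2.1 hαnd).2, (split_facts hlen hbd hch hsh.2.2 hαnd).2⟩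
  case hj =>
    rintro ⟨g, h⟩ hq
    rw [Finset.mem_product] at hq
    obtain ⟨hg, hh⟩ := hq
    obtain ⟨h1, h2, h3⟩ := merge_facts hσπnd hg hh
    obtain ⟨hf1, hf2⟩ := filter_merge hσπnd hdisj hg hh
    obtain ⟨hgl, hgb, hgc⟩ := mem_Fset.mp hg
    obtain ⟨hhl, hhb, hhc⟩ := mem_Fset.mp hh
    set M := mrg (g.zip σ) (h.zip π) with hM
    rw [Finset.mem_sigma]
    have hσsub : σ <+ M.map Prod.snd := by
      have : (M.filter (fun z => z.2 ∈ σ)).map Prod.snd <+ M.map Prod.snd :=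
        (List.filter_sublist (l := M)).map Prod.snd
      rwa [hf1, List.map_snd_zip hgl.ge] at this
    have hπsub : π <+ M.map Prod.snd := by
      have : (M.filter (fun z => z.2 ∈ π)).map Prod.snd <+ M.map Prod.snd :=
        (List.filter_sublist (l := M)).map Prod.snd
      rwa [hf2, List.map_snd_zip hhl.ge] at this
    constructor
    · apply (hS _).mpr
      refine ⟨?_, hσsub, hπsub⟩
      rw [List.length_map, h1.length_eq, List.length_append, List.length_zip, List.length_zip]
      omega
    · apply mem_Fset.mpr
      refine ⟨by simp, ?_, ?_⟩
      · intro z hz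
        obtain ⟨pz, hpz, rfl⟩ := List.mem_map.mp hz
        have : pz ∈ (g.zip σ) ++ (h.zip π) := h1.mem_iff.mp hpz
        rcases List.mem_append.mp this with hm | hm
        · apply hgb
          have : pz.1 ∈ (g.zip σ).map Prod.fst := List.mem_map_of_mem (f := Prod.fst) hm
          rwa [List.map_fst_zip hgl.le] at this
        · apply hhb
          have : pz.1 ∈ (h.zip π).map Prod.fst := List.mem_map_of_mem (f := Prod.fst) hm
          rwa [List.map_fst_zip hhl.le] at this
      · rw [zip_fst_snd M]
        exact h2.isChain
  case left_neg =>
    rintro ⟨α, v⟩ hp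
    rw [Finset.mem_sigma] at hp
    obtain ⟨hα, hv⟩ := hp
    dsimp only at hα hv ⊢
    have hsh := (hS α).mp hα
    have hαperm : α ~ σ ++ π := shuffle_perm hsh hdisj
    have hαnd : α.Nodup := hαperm.nodup_iff.mpr hσπnd
    obtain ⟨hlen, hbd, hch⟩ := mem_Fset.mp hv
    set L := v.zip α with hLdef
    obtain ⟨hms1, hmf1⟩ := split_facts hlen hbd hch hsh.2.1 hαnd
    obtain ⟨hms2, hmf2⟩ := split_facts hlen hbd hch hsh.2.2 hαnd
    -- the zip of the components recovers the filters
    have hz1 : ((L.filter (fun z => z.2 ∈ σ)).map Prod.fst).zip σ = L.filter (fun z => z.2 ∈ σ) := by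
      have hzz := zip_fst_snd (L.filter (fun z => z.2 ∈ σ))
      rw [hms1] at hzz
      exact hzz
    have hz2 : ((L.filter (fun z => z.2 ∈ π)).map Prod.fst).zip π = L.filter (fun z => z.2 ∈ π) := by
      have hzz := zip_fst_snd (L.filter (fun z => z.2 ∈ π))
      rw [hms2] at hzz
      exact hzz
    have hLpw : L.Pairwise R := List.isChain_iff_pairwise.mp hch
    -- mrg of the two filters is L
    have hmrgL : mrg (L.filter (fun z => z.2 ∈ σ)) (L.filter (fun z => z.2 ∈ π)) = L := by
      refine (fun hp h1 h2 => List.Perm.eq_of_pairwise' (r := R) h1 h2 hp) ?_ ?_ ?_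
      · refine (mrg_perm _ _).trans ?_
        have hcompl : L.filter (fun z => z.2 ∈ π) = L.filter (fun x => !(fun z : ℕ×ℕ => (z.2 ∈ σ : Bool)) x) := by
          apply List.filter_congr
          intro z hz
          have hzα : z.2 ∈ α := by
            have : z.2 ∈ L.map Prod.snd := List.mem_map_of_mem (f := Prod.snd) hz
            rwa [hLdef, List.map_snd_zip hlen.ge] at this
          have : z.2 ∈ σ ++ π := hαperm.subset hzα
          rcases List.mem_append.mp this with hσm | hπm
          · have hnπ : z.2 ∉ π := fun hc => hdisj hσm hc
            simp [hσm, hnπ]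
          · have hnσ : z.2 ∉ σ := fun hc => hdisj hc hπm
            simp [hπm, hnσ]
        rw [hcompl]
        exact List.filter_append_perm _ L
      · -- mrg is sorted
        have hpw1 : (L.filter (fun z => z.2 ∈ σ)).Pairwise Rle :=
          (hLpw.sublist (List.filter_sublist (l := L))).imp Rle_of_R
        have hpw2 : (L.filter (fun z => z.2 ∈ π)).Pairwise Rle :=
          (hLpw.sublist (List.filter_sublist (l := L))).imp Rle_of_R
        have hle := mrg_pairwise _ _ hpw1 hpw2
        have hperm : mrg (L.filter (fun z => z.2 ∈ σ)) (L.filter (fun z => z.2 ∈ π)) ~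
            L.filter (fun z => z.2 ∈ σ) ++ L.filter (fun z => z.2 ∈ π) := mrg_perm _ _
        have hsnd : ((mrg (L.filter (fun z => z.2 ∈ σ)) (L.filter (fun z => z.2 ∈ π))).map Prod.snd).Nodup := by
          apply (hperm.map Prod.snd).nodup_iff.mpr
          rw [List.map_append, hms1, hms2]
          exact hσπnd
        have hnesnd := List.pairwise_map.mp hsnd
        exact (hle.and hnesnd).imp (fun hab => R_of_Rle hab.1 hab.2)
      · exact hLpw
    show (⟨_, _⟩ : Σ _ : List ℕ, List ℕ) = ⟨α, v⟩
    rw [hz1, hz2, hmrgL]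
    congr 1
    · rw [hLdef, List.map_snd_zip hlen.ge]
    · rw [hLdef]
      exact List.map_fst_zip hlen.le
  case right_neg =>
    rintro ⟨g, h⟩ hq
    rw [Finset.mem_product] at hq
    obtain ⟨hg, hh⟩ := hq
    obtain ⟨hf1, hf2⟩ := filter_merge hσπnd hdisj hg hh
    obtain ⟨hgl, hgb, hgc⟩ := mem_Fset.mp hg
    obtain ⟨hhl, hhb, hhc⟩ := mem_Fset.mp hh
    set M := mrg (g.zip σ) (h.zip π) with hM
    have hzip : (M.map Prod.fst).zip (M.map Prod.snd) = M := zip_fst_snd M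
    simp only [Prod.mk.injEq]
    rw [hzip, hf1, hf2]
    constructor
    · rw [List.map_fst_zip hgl.le]
    · rw [List.map_fst_zip hhl.le]
  case h =>
    rintro ⟨α, v⟩ hp
    rw [Finset.mem_sigma] at hp
    obtain ⟨hα, hv⟩ := hp
    dsimp only at hα hv ⊢
    have hsh := (hS α).mp hα
    have hαperm : α ~ σ ++ π := shuffle_perm hsh hdisj
    obtain ⟨hlen, hbd, hch⟩ := mem_Fset.mp hv
    set L := v.zip α with hLdef
    have hcompl : L.filter (fun z => z.2 ∈ π) = L.filter (fun z => ¬ (z.2 ∈ σ)) := by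
      apply List.filter_congr
      intro z hz
      have hzα : z.2 ∈ α := by
        have : z.2 ∈ L.map Prod.snd := List.mem_map_of_mem (f := Prod.snd) hz
        rwa [hLdef, List.map_snd_zip hlen.ge] at this
      have : z.2 ∈ σ ++ π := hαperm.subset hzα
      rcases List.mem_append.mp this with hσm | hπm
      · have hnπ : z.2 ∉ π := fun hc => hdisj hσm hc
        simp [hσm, hnπ]
      · have hnσ : z.2 ∉ σ := fun hc => hdisj hc hπm
        simp [hπm, hnσ]
    have hvperm : v ~ (L.filter (fun z => z.2 ∈ σ)).map Prod.fst
        ++ (L.filter (fun z => z.2 ∈ π)).map Prod.fst := by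
      rw [hcompl, ← List.map_append]
      have : (L.filter (fun z => z.2 ∈ σ) ++ L.filter (fun z => ¬ (z.2 ∈ σ))) ~ L := by
        simpa using List.filter_append_perm (fun z => z.2 ∈ σ) L
      have hv' : v = L.map Prod.fst := by rw [hLdef, List.map_fst_zip hlen.le]
      rw [hv']
      exact (this.map Prod.fst).symm
    rw [← pow_add, hvperm.sum_eq]
    rw [List.sum_append]


/-- products of (1 - X^e) with all e ≥ K are ≡ 1 mod X^K -/
lemma prod_one_sub (s : Finset ℕ) (e : ℕ → ℕ) (K : ℕ) (he : ∀ j ∈ s, K ≤ e j) :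
    ∃ r : Polynomial ℚ, ∏ j ∈ s, (1 - (X:Polynomial ℚ) ^ e j) = 1 + X ^ K * r := by
  induction s using Finset.induction with
  | empty => exact ⟨0, by simp⟩
  | insert a s' hnotmem ih =>
    obtain ⟨r, hr⟩ := ih (fun j hj => he j (Finset.mem_insert_of_mem hj))
    have hea : K ≤ e a := he a (Finset.mem_insert_self a s')
    refine ⟨r - X ^ (e a - K) - X ^ (e a - K) * (X ^ K * r), ?_⟩
    rw [Finset.prod_insert hnotmem, hr]
    have : (X:Polynomial ℚ) ^ e a = X ^ K * X ^ (e a - K) := by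
      rw [← pow_add]
      congr 1
      omega
    rw [this]
    ring

/-- gauss is the box polynomial -/
lemma gauss_eq_PN (n m : ℕ) : gauss ((n:ℤ) + m) (m:ℤ) = PN m n := by
  rw [gauss, if_pos ⟨by positivity, by omega⟩]
  have htoNat : ((m:ℤ)).toNat = m := by omega
  rw [htoNat]
  have he : ∀ j : ℕ, ((n:ℤ) + m - m + j).toNat = n + j := by intro j; omega
  have h1 : (∏ j ∈ Finset.Icc 1 m, (1 - (X : Polynomial ℚ) ^ ((n:ℤ) + m - m + j).toNat))
      = ∏ j ∈ Finset.range m, (1 - (X:Polynomial ℚ) ^ (n + j + 1)) := by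
    rw [show Finset.Icc 1 m = Finset.Ico 1 (m+1) by rfl, Finset.prod_Ico_eq_prod_range]
    apply Finset.prod_congr (by simp) 
    intro j _
    rw [he (1 + j), show n + (1 + j) = n + j + 1 from by omega]
  have h2 : (∏ j ∈ Finset.Icc 1 m, (1 - (X : Polynomial ℚ) ^ (j:ℕ)))
      = ∏ j ∈ Finset.range m, (1 - (X:Polynomial ℚ) ^ (j + 1)) := by
    rw [show Finset.Icc 1 m = Finset.Ico 1 (m+1) by rfl, Finset.prod_Ico_eq_prod_range]
    apply Finset.prod_congr (by simp)
    intro j _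
    rw [show 1 + j = j + 1 from by omega]
  rw [h1, h2, ← PN_prod m n]
  have hden : (∏ j ∈ Finset.range m, (1 - (X:Polynomial ℚ) ^ (j + 1))) ≠ 0 := by
    apply Finset.prod_ne_zero_iff.mpr
    intro j _
    intro hc
    rw [sub_eq_zero] at hc
    have h1 : ((1:Polynomial ℚ)).natDegree = 0 := Polynomial.natDegree_one
    rw [hc] at h1
    rw [Polynomial.natDegree_X_pow] at h1
    omega
  exact mul_div_cancel_right₀ (PN m n) hden


theorem garsia_gessel_main (n m : ℕ) (σ π : List ℕ)
    (hσl : σ.length = n) (hπl : π.length = m) (hσnd : σ.Nodup) (hπnd : π.Nodup)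
    (hdisj : σ.Disjoint π)
    (S : Finset (List ℕ)) (hS : ∀ α, α ∈ S ↔ IsShuffle σ π α) :
    ∑ α ∈ S, (X : Polynomial ℚ) ^ maj α =
      gauss ((n : ℤ) + m) (m : ℤ) * (X : Polynomial ℚ) ^ (maj σ + maj π) := by
  have hσπnd : (σ ++ π).Nodup := List.nodup_append'.mpr ⟨hσnd, hπnd, hdisj⟩
  set K : ℕ := 2 * ((n+m) * (n+m)) + 1 with hK
  set B : ℕ := K + (n + m) with hB
  have hdesσ : des σ ≤ n := hσl ▸ des_le σ
  have hdesπ : des π ≤ m := hπl ▸ des_le π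
  have hmajσ : maj σ ≤ n * n := by have := maj_le σ; rwa [hσl] at this
  have hmajπ : maj π ≤ m * m := by have := maj_le π; rwa [hπl] at this
  have hSfact : ∀ α ∈ S, α.length = n + m ∧ α.Nodup := by
    intro α hα
    have hsh := (hS α).mp hα
    refine ⟨by rw [hsh.1, hσl, hπl], ?_⟩
    exact (shuffle_perm hsh hdisj).nodup_iff.mpr hσπnd
  -- step 1 : the main identity with PN factors
  have h1 : ∀ α ∈ S, ∑ v ∈ Fset α B, (X:Polynomial ℚ)^v.sum
      = X ^ maj α * PN (n+m) (B - des α) := by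
    intro α hα
    obtain ⟨hlen, hnd⟩ := hSfact α hα
    have hdesα : des α ≤ n + m := by have h := des_le α; rw [hlen] at h; exact h
    rw [sumFset (α.length + B) α B le_rfl hnd, hlen]
    rw [PZ_nonneg (by rw [hB, hK]; omega)]
    have ht : ((B:ℤ) - (des α:ℤ)).toNat = B - des α := by rw [hB, hK]; omega
    rw [ht]
  have hmain : ∑ α ∈ S, (X:Polynomial ℚ) ^ maj α * PN (n+m) (B - des α)
      = (X ^ maj σ * PN n (B - des σ)) * (X ^ maj π * PN m (B - des π)) := by
    rw [← Finset.sum_congr rfl h1, lemmaB σ π hσnd hπnd hdisj S hS B]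
    rw [sumFset (σ.length + B) σ B le_rfl hσnd, sumFset (π.length + B) π B le_rfl hπnd]
    rw [hσl, hπl, PZ_nonneg (by rw [hB, hK]; omega), PZ_nonneg (by rw [hB, hK]; omega)]
    have htσ : ((B:ℤ) - (des σ:ℤ)).toNat = B - des σ := by rw [hB, hK]; omega
    have htπ : ((B:ℤ) - (des π:ℤ)).toNat = B - des π := by rw [hB, hK]; omega
    rw [htσ, htπ]
  -- step 2 : multiply by the full product DN
  have hmainD := congrArg
    (· * ∏ j ∈ Finset.range (n+m), (1 - (X:Polynomial ℚ)^(j+1))) hmain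
  -- DN factors
  have hDN : (∏ j ∈ Finset.range (n+m), (1 - (X:Polynomial ℚ)^(j+1)))
      = (∏ j ∈ Finset.range n, (1 - (X:Polynomial ℚ)^(j+1)))
        * (PN m n * ∏ j ∈ Finset.range m, (1 - (X:Polynomial ℚ)^(j+1))) := by
    rw [PN_prod m n, Finset.prod_range_add]
  -- claim 1 : LHS*DN ≡ F mod X^K
  have claim1 : (X:Polynomial ℚ)^K ∣
      ((∑ α ∈ S, (X:Polynomial ℚ) ^ maj α * PN (n+m) (B - des α))
        * ∏ j ∈ Finset.range (n+m), (1 - (X:Polynomial ℚ)^(j+1)))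
      - ∑ α ∈ S, (X:Polynomial ℚ) ^ maj α := by
    rw [Finset.sum_mul, ← Finset.sum_sub_distrib]
    apply Finset.dvd_sum
    intro α hα
    obtain ⟨hlen, hnd⟩ := hSfact α hα
    have hdesα : des α ≤ n + m := by have h := des_le α; rw [hlen] at h; exact h
    rw [mul_assoc, PN_prod (n+m) (B - des α)]
    obtain ⟨r, hr⟩ := prod_one_sub (Finset.range (n+m)) (fun j => (B - des α) + j + 1) K
      (fun j _ => by show K ≤ B - des α + j + 1; rw [hB]; omega)
    rw [hr]
    exact ⟨X ^ maj α * r, by ring⟩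
  -- claim 2 : RHS*DN ≡ X^{majσ+majπ} PN m n mod X^K
  have claim2 : (X:Polynomial ℚ)^K ∣
      ((X ^ maj σ * PN n (B - des σ)) * (X ^ maj π * PN m (B - des π))
        * ∏ j ∈ Finset.range (n+m), (1 - (X:Polynomial ℚ)^(j+1)))
      - (X:Polynomial ℚ) ^ (maj σ + maj π) * PN m n := by
    have e : (X ^ maj σ * PN n (B - des σ)) * (X ^ maj π * PN m (B - des π))
        * ∏ j ∈ Finset.range (n+m), (1 - (X:Polynomial ℚ)^(j+1))
        = ((X:Polynomial ℚ) ^ (maj σ + maj π) * PN m n)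
          * ((PN n (B - des σ) * ∏ j ∈ Finset.range n, (1 - (X:Polynomial ℚ)^(j+1)))
            * (PN m (B - des π) * ∏ j ∈ Finset.range m, (1 - (X:Polynomial ℚ)^(j+1)))) := by
      rw [hDN, pow_add]
      ring
    rw [e, PN_prod n (B - des σ), PN_prod m (B - des π)]
    obtain ⟨r1, hr1⟩ := prod_one_sub (Finset.range n) (fun j => (B - des σ) + j + 1) K
      (fun j _ => by show K ≤ B - des σ + j + 1; rw [hB]; omega)
    obtain ⟨r2, hr2⟩ := prod_one_sub (Finset.range m) (fun j => (B - des π) + j + 1) K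
      (fun j _ => by show K ≤ B - des π + j + 1; rw [hB]; omega)
    rw [hr1, hr2]
    exact ⟨(X:Polynomial ℚ) ^ (maj σ + maj π) * PN m n * (r1 + r2 + X^K * (r1 * r2)), by ring⟩
  -- combine
  have key : (X:Polynomial ℚ)^K ∣
      (∑ α ∈ S, (X:Polynomial ℚ) ^ maj α) - (X:Polynomial ℚ) ^ (maj σ + maj π) * PN m n := by
    have hT : (∑ α ∈ S, (X:Polynomial ℚ) ^ maj α)
        - (X:Polynomial ℚ) ^ (maj σ + maj π) * PN m n
        = (((X ^ maj σ * PN n (B - des σ)) * (X ^ maj π * PN m (B - des π))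
            * ∏ j ∈ Finset.range (n+m), (1 - (X:Polynomial ℚ)^(j+1)))
          - (X:Polynomial ℚ) ^ (maj σ + maj π) * PN m n)
        - (((∑ α ∈ S, (X:Polynomial ℚ) ^ maj α * PN (n+m) (B - des α))
            * ∏ j ∈ Finset.range (n+m), (1 - (X:Polynomial ℚ)^(j+1)))
          - ∑ α ∈ S, (X:Polynomial ℚ) ^ maj α) := by
      rw [← hmainD]
      ring
    rw [hT]
    exact dvd_sub claim2 claim1
  -- degree bound
  have hdegF : (∑ α ∈ S, (X:Polynomial ℚ) ^ maj α).natDegree ≤ (n+m)*(n+m) := by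
    apply Polynomial.natDegree_sum_le_of_forall_le
    intro α hα
    obtain ⟨hlen, _⟩ := hSfact α hα
    rw [Polynomial.natDegree_X_pow]
    have := maj_le α
    rw [hlen] at this
    exact this
  have hdegG : ((X:Polynomial ℚ) ^ (maj σ + maj π) * PN m n).natDegree ≤ 2*((n+m)*(n+m)) := by
    apply le_trans (Polynomial.natDegree_mul_le)
    rw [Polynomial.natDegree_X_pow]
    have := PN_natDegree_le m n
    nlinarith
  have hzero : (∑ α ∈ S, (X:Polynomial ℚ) ^ maj α)
      - (X:Polynomial ℚ) ^ (maj σ + maj π) * PN m n = 0 := by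
    obtain ⟨s, hs⟩ := key
    rcases eq_or_ne s 0 with rfl | hsne
    · rw [hs, mul_zero]
    · exfalso
      have hXK : (X:Polynomial ℚ)^K ≠ 0 := pow_ne_zero _ Polynomial.X_ne_zero
      have hdeg1 : ((X:Polynomial ℚ)^K * s).natDegree = K + s.natDegree := by
        rw [Polynomial.natDegree_mul hXK hsne, Polynomial.natDegree_X_pow]
      have hdeg2 : ((∑ α ∈ S, (X:Polynomial ℚ) ^ maj α)
          - (X:Polynomial ℚ) ^ (maj σ + maj π) * PN m n).natDegree ≤ 2*((n+m)*(n+m)) := by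
        apply le_trans (Polynomial.natDegree_sub_le _ _)
        exact max_le (le_trans hdegF (by nlinarith)) hdegG
      rw [hs, hdeg1, hK] at hdeg2
      omega
  rw [sub_eq_zero] at hzero
  rw [hzero, gauss_eq_PN]
  ring


end GG

/-- **Garsia–Gessel.** -/
theorem garsia_gessel (n m : ℕ) (σ π : List ℕ)
    (hσl : σ.length = n) (hπl : π.length = m) (hσnd : σ.Nodup) (hπnd : π.Nodup)
    (hdisj : σ.Disjoint π)
    (S : Finset (List ℕ)) (hS : ∀ α, α ∈ S ↔ IsShuffle σ π α) :
    ∑ α ∈ S, (X : Polynomial ℚ) ^ maj α =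
      gauss ((n : ℤ) + m) (m : ℤ) * (X : Polynomial ℚ) ^ (maj σ + maj π) :=
  GG.garsia_gessel_main n m σ π hσl hπl hσnd hπnd hdisj S hS
end

section
/- Let σ = σ₁σ₂⋯σ_n be a word of length n and let r be a natural number not occurring in σ. Then ∑_{i=0}^{n} q^{maj(σ^{(i)}(r))} = (1 + q + ⋯ + q^{n}) · q^{maj(σ)} as an identity of polynomials in q. -/
open Polynomial List

lemma descents_cons (a : ℕ) (w : List ℕ) (hw : w ≠ []) :
    descents (a :: w) =
      (if w.getD 0 0 < a then ({1} : Finset ℕ) else ∅) ∪ (descents w).image (· + 1) := by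
  ext i
  simp only [descents, Finset.mem_filter, Finset.mem_Ico, Finset.mem_union, Finset.mem_image]
  have hlen : 1 ≤ w.length := by
    cases w with
    | nil => exact absurd rfl hw
    | cons b t => simp
  constructor
  · rintro ⟨⟨h1, h2⟩, h3⟩
    match i, h1 with
    | 1, _ =>
      left
      rw [show (1:ℕ) - 1 = 0 from rfl, List.getD_cons_zero, List.getD_cons_succ] at h3
      rw [if_pos h3]
      simp
    | (j+2), _ =>
      right
      refine ⟨j+1, ⟨⟨by omega, ?_⟩, ?_⟩, rfl⟩
      · simp only [List.length_cons] at h2; omega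
      · rw [List.getD_cons_succ, show j+2-1 = j+1 from rfl, List.getD_cons_succ] at h3
        exact h3
  · rintro (h | ⟨j, ⟨⟨hj1, hj2⟩, hj3⟩, rfl⟩)
    · split at h
      · next hc =>
        simp only [Finset.mem_singleton] at h
        subst h
        refine ⟨⟨le_refl _, by simp; omega⟩, ?_⟩
        rw [show (1:ℕ) - 1 = 0 from rfl, List.getD_cons_zero, List.getD_cons_succ]
        exact hc
      · simp at h
    · refine ⟨⟨by omega, by simp; omega⟩, ?_⟩
      match j, hj1 with
      | (k+1), _ =>
        rw [List.getD_cons_succ, show k+1+1-1 = k+1 from rfl, List.getD_cons_succ]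
        exact hj3

lemma not_mem_image_one (w : List ℕ) : 1 ∉ (descents w).image (· + 1) := by
  intro h
  simp only [Finset.mem_image] at h
  obtain ⟨j, hj, hj1⟩ := h
  have : 1 ≤ j := ((Finset.mem_Ico.1 (Finset.mem_filter.1 hj).1)).1
  omega

lemma disj_aux (w : List ℕ) (c : ℕ) :
    Disjoint (if 0 < c then ({1} : Finset ℕ) else ∅) ((descents w).image (· + 1)) := by
  split
  · simpa using not_mem_image_one w
  · simp

lemma des_cons (a : ℕ) (w : List ℕ) (hw : w ≠ []) :
    des (a :: w) = des w + (if w.getD 0 0 < a then 1 else 0) := by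
  rw [des, descents_cons a w hw, Finset.card_union_of_disjoint, Finset.card_image_of_injective _ (add_left_injective 1)]
  · split <;> simp [des, Nat.add_comm]
  · split
    · simpa using not_mem_image_one w
    · simp

lemma maj_cons (a : ℕ) (w : List ℕ) (hw : w ≠ []) :
    maj (a :: w) = maj w + des w + (if w.getD 0 0 < a then 1 else 0) := by
  rw [maj, descents_cons a w hw, Finset.sum_union, Finset.sum_image (g := (· + 1)) (by intro x _ y _ hxy; exact Nat.add_right_cancel hxy)]
  · have : ∑ j ∈ descents w, (j + 1) = maj w + des w := by
      rw [Finset.sum_add_distrib]; simp [maj, des]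
    rw [this]
    split <;> simp <;> ring
  · split
    · simpa using not_mem_image_one w
    · simp

lemma descents_nil : descents [] = ∅ := by simp [descents]
lemma descents_single (a : ℕ) : descents [a] = ∅ := by simp [descents]
lemma des_lt (w : List ℕ) (hw : w ≠ []) : des w < w.length := by
  have h1 : des w ≤ (Finset.Ico 1 w.length).card := Finset.card_filter_le _ _
  rw [Nat.card_Ico] at h1
  have : 1 ≤ w.length := by cases w with | nil => exact absurd rfl hw | cons b t => simp
  omega

lemma map_range_succ' {α : Type*} (g : ℕ → α) (k : ℕ) :
    Multiset.map g (Multiset.range (k+1)) = g 0 ::ₘ Multiset.map (fun j => g (j+1)) (Multiset.range k) := by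
  have h1 : Multiset.range (k+1) = (0 : ℕ) ::ₘ Multiset.map (fun j => j + 1) (Multiset.range k) := by
    have : Multiset.range (k+1) = ↑(List.range (k+1)) := rfl
    rw [this, List.range_succ_eq_map]
    have : List.map Nat.succ (List.range k) = List.map (fun j => j + 1) (List.range k) := by
      simp [Nat.succ_eq_add_one]
    rw [this]
    rfl
  rw [h1, Multiset.map_cons, Multiset.map_map]
  rfl

lemma map_cons_of_mem {α β : Type*} [DecidableEq α] (f : α → β) {s : Multiset α} {x : α} (hx : x ∈ s) :
    Multiset.map f s = f x ::ₘ Multiset.map f (s.erase x) := by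
  conv_lhs => rw [← Multiset.cons_erase hx]
  rw [Multiset.map_cons]

lemma e_inj (d' : ℕ) : Function.Injective (fun j => if j ≤ d' then j else j + 1) := by
  intro x y hxy
  simp only at hxy
  split_ifs at hxy <;> omega

lemma map_shift (d' n' : ℕ) (h : d' ≤ n') :
    Multiset.map (fun j => if j ≤ d' then j else j + 1) (Multiset.range (n'+1)) =
      (Multiset.range (n'+2)).erase (d'+1) := by
  have hnl : Multiset.Nodup (Multiset.map (fun j => if j ≤ d' then j else j + 1) (Multiset.range (n'+1))) :=
    Multiset.Nodup.map (e_inj d') (Multiset.nodup_range _)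
  have hnr : Multiset.Nodup ((Multiset.range (n'+2)).erase (d'+1)) :=
    Multiset.Nodup.erase _ (Multiset.nodup_range _)
  rw [Multiset.Nodup.ext hnl hnr]
  intro x
  rw [Multiset.Nodup.mem_erase_iff (Multiset.nodup_range _)]
  simp only [Multiset.mem_map, Multiset.mem_range]
  constructor
  · rintro ⟨j, hj, rfl⟩
    split_ifs <;> (constructor; omega; omega)
  · rintro ⟨hne, hx⟩
    refine ⟨if x ≤ d' then x else x - 1, by split_ifs <;> omega, ?_⟩
    split_ifs <;> omega

lemma des_pair (x y : ℕ) : des [x, y] = if y < x then 1 else 0 := by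
  rw [des, descents_cons x [y] (by simp)]
  simp only [descents]
  split_ifs <;> simp_all

lemma maj_pair (x y : ℕ) : maj [x, y] = if y < x then 1 else 0 := by
  rw [maj, descents_cons x [y] (by simp)]
  simp only [descents]
  split_ifs <;> simp_all

lemma des_single (a : ℕ) : des [a] = 0 := by simp [des, descents]
lemma maj_single (a : ℕ) : maj [a] = 0 := by simp [maj, descents]
lemma des_nil : des [] = 0 := by simp [des, descents]
lemma maj_nil : maj [] = 0 := by simp [maj, descents]

lemma key (r : ℕ) (σ : List ℕ) (hnd : σ.Nodup) (hr : r ∉ σ) :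
    Multiset.map (fun i => (des (ins σ i r), maj (ins σ i r))) (Multiset.range (σ.length + 1)) =
      Multiset.map (fun j => ((if j ≤ des σ then des σ else des σ + 1), maj σ + j))
        (Multiset.range (σ.length + 1)) := by
  induction σ with
  | nil =>
    simp [ins, List.insertIdx, des_single, maj_single, des_nil, maj_nil]
  | cons a σ' IH =>
    have hnd' : σ'.Nodup := (List.nodup_cons.1 hnd).2
    have haσ' : a ∉ σ' := (List.nodup_cons.1 hnd).1
    have hra : r ≠ a := fun h => hr (h ▸ (List.mem_cons_self : a ∈ a :: σ'))
    have hrσ' : r ∉ σ' := fun h => hr (List.mem_cons_of_mem a h)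
    cases σ' with
    | nil =>
      -- σ = [a]
      have h2 : Multiset.range 2 = 1 ::ₘ 0 ::ₘ 0 := by decide
      simp only [List.length_cons, List.length_nil, Nat.zero_add, h2, Multiset.map_cons,
        Multiset.map_zero]
      have e0 : ins [a] 0 r = [r, a] := rfl
      have e1 : ins [a] 1 r = [a, r] := rfl
      rw [e0, e1, des_pair, des_pair, maj_pair, maj_pair, des_single, maj_single]
      rcases Nat.lt_or_ge r a with hlt | hge
      · rw [if_pos hlt, if_neg (by omega)]
        simp
      · have hlt : a < r := by omega
        rw [if_neg (by omega), if_pos hlt]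
        exact Multiset.cons_swap _ _ _
    | cons h τ =>
      set w : List ℕ := h :: τ with hwdef
      have hwne : w ≠ [] := by simp [hwdef]
      have hhead : w.getD 0 0 = h := rfl
      have hah : a ≠ h := fun e => haσ' (e ▸ (List.mem_cons_self : h ∈ h :: τ))
      have hrh : r ≠ h := fun e => hrσ' (e ▸ (List.mem_cons_self : h ∈ h :: τ))
      set n' := w.length with hn'def
      set d' := des w with hd'def
      set m' := maj w with hm'def
      have hd'n : d' < n' := des_lt w hwne
      -- abbreviations
      set D := des (a :: w) with hDdef
      set M := maj (a :: w) with hMdef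
      have hdes : D = d' + (if h < a then 1 else 0) := by
        rw [hDdef, des_cons a w hwne, hhead, hd'def]
      have hmaj : M = m' + d' + (if h < a then 1 else 0) := by
        rw [hMdef, maj_cons a w hwne, hhead, hm'def, hd'def]
      set P : ℕ → ℕ × ℕ := fun i => (des (ins (a :: w) i r), maj (ins (a :: w) i r)) with hPdef
      set f : ℕ → ℕ × ℕ := fun j => ((if j ≤ D then D else D + 1), M + j) with hfdef
      set f' : ℕ → ℕ × ℕ := fun j => ((if j ≤ d' then d' else d' + 1), m' + j) with hf'def
      set ej : ℕ := if d' + (if h < r then 1 else 0) ≤ d'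
          then d' + (if h < r then 1 else 0) else d' + (if h < r then 1 else 0) + 1 with hejdef
      -- value computations
      have hP0 : P 0 = (D + (if a < r then 1 else 0), M + D + (if a < r then 1 else 0)) := by
        have h0 : ins (a :: w) 0 r = r :: a :: w := rfl
        have hg : (a :: w).getD 0 0 = a := rfl
        rw [hPdef]
        simp only
        rw [h0, des_cons r (a :: w) (by simp), maj_cons r (a :: w) (by simp), hg,
          ← hDdef, ← hMdef]
      have hdesr : des (ins w 0 r) = d' + (if h < r then 1 else 0) := by
        have h0 : ins w 0 r = r :: w := rfl
        rw [h0, des_cons r w hwne, hhead, hd'def]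
      have hmajr : maj (ins w 0 r) = m' + d' + (if h < r then 1 else 0) := by
        have h0 : ins w 0 r = r :: w := rfl
        rw [h0, maj_cons r w hwne, hhead, hm'def, hd'def]
      have hP1 : P 1 = (d' + (if h < r then 1 else 0) + (if r < a then 1 else 0),
          m' + d' + (if h < r then 1 else 0) + (d' + (if h < r then 1 else 0))
            + (if r < a then 1 else 0)) := by
        have h1 : ins (a :: w) 1 r = a :: r :: w := rfl
        have hg : (r :: w).getD 0 0 = r := rfl
        have h1' : (r :: w : List ℕ) = ins w 0 r := rfl
        rw [hPdef]
        simp only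
        rw [h1, des_cons a (r :: w) (by simp), maj_cons a (r :: w) (by simp), hg, h1',
          hdesr, hmajr]
      have hPj : ∀ j : ℕ, P (j + 2) =
          (des (ins w (j+1) r) + (if h < a then 1 else 0),
           maj (ins w (j+1) r) + des (ins w (j+1) r) + (if h < a then 1 else 0)) := by
        intro j
        have h2 : ins (a :: w) (j + 2) r = a :: ins w (j + 1) r := rfl
        have hne : ins w (j + 1) r ≠ [] := by
          show h :: τ.insertIdx j r ≠ []
          simp
        have hg : (ins w (j + 1) r).getD 0 0 = h := rfl
        rw [hPdef]
        simp only
        rw [h2, des_cons _ _ hne, maj_cons _ _ hne, hg]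
      -- the induction hypothesis, decomposed
      have hIH := IH hnd' hrσ'
      have hj0mem : d' + (if h < r then 1 else 0) ∈ Multiset.range (n' + 1) := by
        rw [Multiset.mem_range]
        split_ifs <;> omega
      have hpair0 : (des (ins w 0 r), maj (ins w 0 r))
          = f' (d' + (if h < r then 1 else 0)) := by
        simp only [hf'def]
        rw [hdesr, hmajr, Prod.mk.injEq]
        constructor
        · split_ifs <;> omega
        · omega
      have h3 : Multiset.map (fun j => (des (ins w (j+1) r), maj (ins w (j+1) r)))
            (Multiset.range n')
          = Multiset.map f' ((Multiset.range (n' + 1)).erase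
              (d' + (if h < r then 1 else 0))) := by
        rw [map_cons_of_mem f' hj0mem] at hIH
        rw [map_range_succ' (fun i => (des (ins w i r), maj (ins w i r))) n', hpair0] at hIH
        exact (Multiset.cons_inj_right _).mp hIH
      -- left-hand side chain
      have hL : Multiset.map P (Multiset.range (n' + 1 + 1)) =
          P 0 ::ₘ P 1 ::ₘ Multiset.map f
            (((Multiset.range (n' + 1 + 1)).erase (d' + 1)).erase ej) := by
        rw [map_range_succ' P (n' + 1), map_range_succ' (fun j => P (j + 1)) n']
        congr 1
        congr 1
        calc Multiset.map (fun j => P (j + 1 + 1)) (Multiset.range n')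
            = Multiset.map (fun p : ℕ × ℕ => (p.1 + (if h < a then 1 else 0),
                p.2 + p.1 + (if h < a then 1 else 0)))
                (Multiset.map (fun j => (des (ins w (j+1) r), maj (ins w (j+1) r)))
                  (Multiset.range n')) := by
              rw [Multiset.map_map]
              exact Multiset.map_congr rfl (fun j _ => hPj j)
          _ = Multiset.map (fun p : ℕ × ℕ => (p.1 + (if h < a then 1 else 0),
                p.2 + p.1 + (if h < a then 1 else 0)))
                (Multiset.map f' ((Multiset.range (n' + 1)).erase
                  (d' + (if h < r then 1 else 0)))) := by rw [h3]
          _ = Multiset.map (fun j => f (if j ≤ d' then j else j + 1))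
                ((Multiset.range (n' + 1)).erase (d' + (if h < r then 1 else 0))) := by
              rw [Multiset.map_map]
              refine Multiset.map_congr rfl (fun j _ => ?_)
              simp only [Function.comp_apply, hf'def, hfdef, Prod.mk.injEq]
              rw [hdes, hmaj]
              by_cases hb : h < a <;>
                simp only [hb, if_true, if_false] <;> split_ifs <;> omega
          _ = Multiset.map f (Multiset.map (fun j => if j ≤ d' then j else j + 1)
                ((Multiset.range (n' + 1)).erase (d' + (if h < r then 1 else 0)))) := by
              rw [Multiset.map_map]
              rfl
          _ = Multiset.map f (((Multiset.range (n' + 1 + 1)).erase (d' + 1)).erase ej) := by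
              rw [Multiset.map_erase _ (e_inj d'), map_shift d' n' (le_of_lt hd'n)]
      -- right-hand side chain
      have hd1mem : d' + 1 ∈ Multiset.range (n' + 1 + 1) := by
        rw [Multiset.mem_range]; omega
      have hejmem : ej ∈ (Multiset.range (n' + 1 + 1)).erase (d' + 1) := by
        rw [Multiset.mem_erase_of_ne (by rw [hejdef]; split_ifs <;> omega)]
        rw [Multiset.mem_range, hejdef]
        split_ifs <;> omega
      have hR : Multiset.map f (Multiset.range (n' + 1 + 1)) =
          f (d' + 1) ::ₘ f ej ::ₘ Multiset.map f
            (((Multiset.range (n' + 1 + 1)).erase (d' + 1)).erase ej) := by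
        rw [map_cons_of_mem f hd1mem, map_cons_of_mem f hejmem]
      -- finish
      show Multiset.map P (Multiset.range ((a :: w).length + 1))
          = Multiset.map f (Multiset.range ((a :: w).length + 1))
      have hlen : (a :: w).length + 1 = n' + 1 + 1 := by simp [hn'def]
      rw [hlen, hL, hR]
      have hswap : (P 0 = f (d' + 1) ∧ P 1 = f ej) ∨ (P 0 = f ej ∧ P 1 = f (d' + 1)) := by
        by_cases ha : a < r <;> by_cases hb : h < a <;> by_cases hc : h < r
        · -- (1,1,1)
          right
          rw [if_pos hb] at hdes hmaj
          refine ⟨?_, ?_⟩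
          · rw [hP0]; simp only [hfdef, hejdef, Prod.mk.injEq]; split_ifs <;> omega
          · rw [hP1]; simp only [hfdef, hejdef, Prod.mk.injEq]; split_ifs <;> omega
        · -- (1,1,0) impossible
          exact absurd (by omega : h < r) hc
        · -- (1,0,1)
          left
          rw [if_neg hb] at hdes hmaj
          refine ⟨?_, ?_⟩
          · rw [hP0]; simp only [hfdef, hejdef, Prod.mk.injEq]; split_ifs <;> omega
          · rw [hP1]; simp only [hfdef, hejdef, Prod.mk.injEq]; split_ifs <;> omega
        · -- (1,0,0)
          left
          rw [if_neg hb] at hdes hmaj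
          refine ⟨?_, ?_⟩
          · rw [hP0]; simp only [hfdef, hejdef, Prod.mk.injEq]; split_ifs <;> omega
          · rw [hP1]; simp only [hfdef, hejdef, Prod.mk.injEq]; split_ifs <;> omega
        · -- (0,1,1)
          left
          rw [if_pos hb] at hdes hmaj
          refine ⟨?_, ?_⟩
          · rw [hP0]; simp only [hfdef, hejdef, Prod.mk.injEq]; split_ifs <;> omega
          · rw [hP1]; simp only [hfdef, hejdef, Prod.mk.injEq]; split_ifs <;> omega
        · -- (0,1,0)
          left
          rw [if_pos hb] at hdes hmaj
          refine ⟨?_, ?_⟩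
          · rw [hP0]; simp only [hfdef, hejdef, Prod.mk.injEq]; split_ifs <;> omega
          · rw [hP1]; simp only [hfdef, hejdef, Prod.mk.injEq]; split_ifs <;> omega
        · -- (0,0,1) impossible
          have h1 : r < a := by omega
          have h2 : a < h := by omega
          omega
        · -- (0,0,0)
          right
          rw [if_neg hb] at hdes hmaj
          refine ⟨?_, ?_⟩
          · rw [hP0]; simp only [hfdef, hejdef, Prod.mk.injEq]; split_ifs <;> omega
          · rw [hP1]; simp only [hfdef, hejdef, Prod.mk.injEq]; split_ifs <;> omega
      rcases hswap with ⟨e1, e2⟩ | ⟨e1, e2⟩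
      · rw [e1, e2]
      · rw [e1, e2]
        exact Multiset.cons_swap _ _ _

/-- Inserting a new letter `r` into all `n+1` spaces of `σ` multiplies the
generating function `q^{maj σ}` by `1 + q + ⋯ + q^n`. -/
theorem insertion_sum (n : ℕ) (σ : List ℕ) (hσl : σ.length = n) (hσnd : σ.Nodup)
    (r : ℕ) (hr : r ∉ σ) :
    ∑ i ∈ Finset.range (n + 1), (X : Polynomial ℚ) ^ maj (ins σ i r) =
      (∑ j ∈ Finset.range (n + 1), (X : Polynomial ℚ) ^ j) * (X : Polynomial ℚ) ^ maj σ := by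
  subst hσl
  have hkey := key r σ hσnd hr
  have hmajm : Multiset.map (fun i => maj (ins σ i r)) (Multiset.range (σ.length + 1)) =
      Multiset.map (fun j => maj σ + j) (Multiset.range (σ.length + 1)) := by
    have h2 := congrArg (Multiset.map Prod.snd) hkey
    rw [Multiset.map_map, Multiset.map_map] at h2
    exact h2
  have hxm : Multiset.map (fun i => (X : Polynomial ℚ) ^ maj (ins σ i r))
        (Multiset.range (σ.length + 1)) =
      Multiset.map (fun j => (X : Polynomial ℚ) ^ (maj σ + j))
        (Multiset.range (σ.length + 1)) := by
    have h3 := congrArg (Multiset.map (fun m => (X : Polynomial ℚ) ^ m)) hmajm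
    rw [Multiset.map_map, Multiset.map_map] at h3
    exact h3
  have h4 : ∑ i ∈ Finset.range (σ.length + 1), (X : Polynomial ℚ) ^ maj (ins σ i r)
      = ∑ j ∈ Finset.range (σ.length + 1), (X : Polynomial ℚ) ^ (maj σ + j) := by
    rw [Finset.sum_eq_multiset_sum, Finset.sum_eq_multiset_sum, Finset.range_val, hxm]
  rw [h4, Finset.sum_mul]
  apply Finset.sum_congr rfl
  intro j _
  rw [pow_add, mul_comm]
end

section
/- Let σ = σ₁⋯σ_n be a word of length n and r a natural number not occurring in σ. If i (with 0 ≤ i ≤ n) is an RL-space of σ relative to r, then des(σ^{(i)}(r)) = des(σ). -/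
open Polynomial List

/-- recursive descent count -/
def dcount : List ℕ → ℕ
  | [] => 0
  | [_] => 0
  | a :: b :: t => (if b < a then 1 else 0) + dcount (b :: t)

lemma des_cons_cons (x y : ℕ) (t : List ℕ) :
    des (x :: y :: t) = (if y < x then 1 else 0) + des (y :: t) := by
  classical
  unfold des descents
  have hlen : (x :: y :: t).length = (y :: t).length + 1 := rfl
  set n := (y :: t).length with hn
  have hn1 : 1 ≤ n := by simp [hn]
  rw [hlen]
  rw [← Finset.insert_Ico_add_one_left_eq_Ico (by omega : 1 < n + 1)]
  rw [Finset.filter_insert]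
  have himg : Finset.Ico (1 + 1) (n + 1) = (Finset.Ico 1 n).image (· + 1) := by
    rw [Finset.image_add_right_Ico]
  have hshift : (Finset.Ico (1+1) (n + 1)).filter
      (fun i => (x :: y :: t).getD i 0 < (x :: y :: t).getD (i - 1) 0) =
      ((Finset.Ico 1 n).filter
        (fun i => (y :: t).getD i 0 < (y :: t).getD (i - 1) 0)).image (· + 1) := by
    rw [himg, Finset.filter_image]
    congr 1
    apply Finset.filter_congr
    intro k hk
    simp only [Finset.mem_Ico] at hk
    obtain ⟨m, rfl⟩ : ∃ m, k = m + 1 := ⟨k - 1, by omega⟩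
    simp [List.getD_cons_succ]
  by_cases h1 : (x :: y :: t).getD 1 0 < (x :: y :: t).getD 0 0
  · rw [if_pos h1, hshift]
    rw [Finset.card_insert_of_notMem (by
      simp only [Finset.mem_image, Finset.mem_filter, Finset.mem_Ico, not_exists]
      rintro k ⟨⟨⟨hk1, hk2⟩, -⟩, hk⟩
      omega)]
    rw [Finset.card_image_of_injective _ (add_left_injective 1)]
    have : y < x := by simpa using h1
    simp [this, Nat.add_comm]
  · rw [if_neg h1, hshift]
    rw [Finset.card_image_of_injective _ (add_left_injective 1)]
    have : ¬ y < x := by simpa using h1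
    simp [this]

lemma des_eq_dcount : ∀ w : List ℕ, des w = dcount w
  | [] => by simp [des, descents, dcount]
  | [x] => by simp [des, descents, dcount]
  | x :: y :: t => by rw [des_cons_cons, des_eq_dcount (y :: t)]; rfl

lemma dcount_insert : ∀ (a : List ℕ) (b : List ℕ) (r : ℕ),
    (match a.getLast?, b.head? with
      | none, none => True
      | some x, none => x < r
      | none, some y => r < y
      | some x, some y => (r < y ∧ y < x) ∨ (y < x ∧ x < r) ∨ (x < r ∧ r < y)) →
    dcount (a ++ r :: b) = dcount (a ++ b)
  | [], [], r, h => rfl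
  | [], y :: b', r, h => by
    simp only [List.getLast?_nil, List.head?_cons] at h
    have : ¬ y < r := by omega
    simp [dcount, this]
  | [x], [], r, h => by
    simp only [List.getLast?_singleton, List.head?_nil] at h
    have : ¬ r < x := by omega
    simp [dcount, this]
  | [x], y :: b', r, h => by
    simp only [List.getLast?_singleton, List.head?_cons] at h
    show ((if r < x then 1 else 0) + ((if y < r then 1 else 0) + dcount (y :: b')))
        = (if y < x then 1 else 0) + dcount (y :: b')
    rcases h with ⟨h1, h2⟩ | ⟨h1, h2⟩ | ⟨h1, h2⟩ <;> split_ifs <;> omega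
  | x1 :: x2 :: a', b, r, h => by
    rw [List.getLast?_cons_cons] at h
    have ih := dcount_insert (x2 :: a') b r h
    show (if x2 < x1 then 1 else 0) + dcount ((x2 :: a') ++ r :: b)
        = (if x2 < x1 then 1 else 0) + dcount ((x2 :: a') ++ b)
    rw [ih]

lemma insertIdx_eq_take_cons_drop : ∀ (l : List ℕ) (i r : ℕ), i ≤ l.length →
    l.insertIdx i r = l.take i ++ r :: l.drop i
  | _, 0, _, _ => rfl
  | [], i + 1, r, h => by simp at h
  | x :: l, i + 1, r, h => by
    rw [List.insertIdx_succ_cons, insertIdx_eq_take_cons_drop l i r (by simpa using h)]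
    rfl

/-- Inserting into an RL-space leaves the number of descents unchanged. -/
theorem rl_space_des (n : ℕ) (σ : List ℕ) (hσl : σ.length = n) (hσnd : σ.Nodup)
    (r : ℕ) (hr : r ∉ σ) (i : ℕ) (hi : i ≤ n) (hRL : IsRL σ r i) :
    des (ins σ i r) = des σ := by
  have hil : i ≤ σ.length := by omega
  rw [ins, insertIdx_eq_take_cons_drop σ i r hil]
  conv_rhs => rw [← List.take_append_drop i σ]
  rw [des_eq_dcount, des_eq_dcount]
  apply dcount_insert
  rcases hRL with ⟨h1, h2⟩ | ⟨h1, h2⟩ | ⟨h1, h2, h3, h4⟩ | ⟨h1, h2, h3, h4⟩ | ⟨h1, h2, h3, h4⟩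
  · subst h1
    rw [List.take_length, List.drop_length]
    cases hL : σ.getLast? with
    | none => simp [hL]
    | some x => simpa [hL] using h2 x hL
  · subst h1
    rw [List.take_zero, List.drop_zero]
    cases hH : σ.head? with
    | none => simp [hH]
    | some y => simpa [hH] using h2 y hH
  all_goals {
    have hlast : (σ.take i).getLast? = some (σ[i-1]'(by omega)) := by
      rw [List.getLast?_eq_getElem?, List.length_take,
        Nat.min_eq_left hil, List.getElem?_take, if_pos (by omega),
        List.getElem?_eq_getElem (by omega)]
    have hhead : (σ.drop i).head? = some (σ[i]'(by omega)) := by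
      rw [List.head?_drop, List.getElem?_eq_getElem (by omega)]
    simp only [List.getD_eq_getElem σ 0 (by omega : i < σ.length),
      List.getD_eq_getElem σ 0 (by omega : i - 1 < σ.length)] at h3 h4
    simp only [hlast, hhead]
    tauto
  }
end

section
/- Let σ = σ₁⋯σ_n be a word of length n and r a natural number not occurring in σ. Then the number of RL-spaces of σ relative to r (among the spaces 0, 1, …, n) is exactly des(σ) + 1, and consequently the number of LR-spaces is n − des(σ). -/
open Polynomial List

lemma getLast?_eq_getD' {l : List ℕ} (h : l ≠ []) :
    l.getLast? = some (l.getD (l.length - 1) 0) := by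
  have hlt : l.length - 1 < l.length := by
    have := List.length_pos_iff.2 h; omega
  rw [List.getLast?_eq_getElem?, List.getElem?_eq_getElem hlt, List.getD_eq_getElem _ _ hlt]

open scoped Classical in
lemma rl_count (σ : List ℕ) : ∀ r : ℕ, σ.Nodup → r ∉ σ →
    ((Finset.range (σ.length + 1)).filter (fun i => IsRL σ r i)).card = des σ + 1 := by
  induction σ using List.reverseRecOn with
  | nil =>
    intro r _ _
    have h0 : IsRL [] r 0 := Or.inl ⟨rfl, by simp⟩
    simp [Finset.filter_singleton, h0, des, descents]
  | append_singleton τ b ih =>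
    intro r hnd hr
    rcases eq_or_ne τ [] with rfl | hτ
    · simp only [List.nil_append] at *
      have hrb : r ≠ b := by simpa using hr
      have h0 : IsRL [b] r 0 ↔ r < b := by
        simp [IsRL]
      have h1 : IsRL [b] r 1 ↔ b < r := by
        simp [IsRL]
      have hdes : des [b] = 0 := by simp [des, descents]
      have hrng : Finset.range ([b].length + 1) = {0, 1} := by
        ext x
        simp only [Finset.mem_range, Finset.mem_insert, Finset.mem_singleton, List.length_cons,
          List.length_nil]
        omega
      rw [hrng]
      rw [Finset.filter_insert, Finset.filter_singleton, hdes]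
      rcases lt_or_gt_of_ne hrb with h | h
      · simp [h0, h1, h, Nat.lt_asymm h]
      · simp [h0, h1, h, Nat.lt_asymm h]
    · have hm0 : 0 < τ.length := List.length_pos_iff.2 hτ
      set m := τ.length with hmdef
      have hndτ : τ.Nodup := (List.nodup_append.1 hnd).1
      have hbτ : b ∉ τ := by
        have := (List.nodup_append.1 hnd).2.2
        intro hb
        exact this b hb b (by simp) rfl
      have hrτ : r ∉ τ := fun h => hr (List.mem_append_left _ h)
      have hrb : r ≠ b := fun h => hr (by simp [h])
      set a := τ.getD (m - 1) 0 with hadef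
      have haτ : a ∈ τ := by
        rw [hadef, List.getD_eq_getElem _ _ (by omega)]
        exact List.getElem_mem _
      have hab : a ≠ b := fun h => hbτ (h ▸ haτ)
      have hra : r ≠ a := fun h => hrτ (h ▸ haτ)
      have hlen : (τ ++ [b]).length = m + 1 := by simp [hmdef]
      have hgb : (τ ++ [b]).getD m 0 = b := by
        rw [List.getD_append_right _ _ _ _ (le_refl _)]
        simp
      have hga : (τ ++ [b]).getD (m - 1) 0 = a := List.getD_append _ _ _ _ (by omega)
      have hgd : ∀ j, j < m → (τ ++ [b]).getD j 0 = τ.getD j 0 :=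
        fun j hj => List.getD_append _ _ _ _ hj
      have hhd : (τ ++ [b]).head? = τ.head? := List.head?_append_of_ne_nil _ hτ
      have hlast : (τ ++ [b]).getLast? = some b := List.getLast?_concat
      have hlastτ : τ.getLast? = some a := getLast?_eq_getD' hτ
      have hdes : des (τ ++ [b]) = des τ + (if b < a then 1 else 0) := by
        unfold des descents
        rw [Finset.card_filter, Finset.card_filter, hlen,
          Finset.sum_Ico_succ_top hm0, hgb, hga]
        congr 1
        apply Finset.sum_congr rfl
        intro i hi
        simp only [Finset.mem_Ico] at hi
        rw [hgd i hi.2, hgd (i - 1) (by omega)]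
      have hA : ∀ i, i < m → (IsRL (τ ++ [b]) r i ↔ IsRL τ r i) := by
        intro i hi
        unfold IsRL
        rw [hlen, hhd, hgd i hi, hgd (i - 1) (by omega), ← hmdef]
        constructor
        · rintro (⟨h, _⟩ | h | ⟨h1, _, h3, h4⟩ | ⟨h1, _, h3, h4⟩ | ⟨h1, _, h3, h4⟩)
          · omega
          · exact Or.inr (Or.inl h)
          · exact Or.inr (Or.inr (Or.inl ⟨h1, by omega, h3, h4⟩))
          · exact Or.inr (Or.inr (Or.inr (Or.inl ⟨h1, by omega, h3, h4⟩)))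
          · exact Or.inr (Or.inr (Or.inr (Or.inr ⟨h1, by omega, h3, h4⟩)))
        · rintro (⟨h, _⟩ | h | ⟨h1, _, h3, h4⟩ | ⟨h1, _, h3, h4⟩ | ⟨h1, _, h3, h4⟩)
          · omega
          · exact Or.inr (Or.inl h)
          · exact Or.inr (Or.inr (Or.inl ⟨h1, by omega, h3, h4⟩))
          · exact Or.inr (Or.inr (Or.inr (Or.inl ⟨h1, by omega, h3, h4⟩)))
          · exact Or.inr (Or.inr (Or.inr (Or.inr ⟨h1, by omega, h3, h4⟩)))
      have hmEq : IsRL (τ ++ [b]) r m ↔ ((r < b ∧ b < a) ∨ (b < a ∧ a < r) ∨ (a < r ∧ r < b)) := by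
        unfold IsRL
        rw [hlen, hgb, hga]
        constructor
        · rintro (⟨h, _⟩ | ⟨h, _⟩ | ⟨_, _, h3, h4⟩ | ⟨_, _, h3, h4⟩ | ⟨_, _, h3, h4⟩)
          · omega
          · omega
          · exact Or.inl ⟨h3, h4⟩
          · exact Or.inr (Or.inl ⟨h3, h4⟩)
          · exact Or.inr (Or.inr ⟨h3, h4⟩)
        · rintro (⟨h1, h2⟩ | ⟨h1, h2⟩ | ⟨h1, h2⟩)
          · exact Or.inr (Or.inr (Or.inl ⟨hm0, by omega, h1, h2⟩))
          · exact Or.inr (Or.inr (Or.inr (Or.inl ⟨hm0, by omega, h1, h2⟩)))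
          · exact Or.inr (Or.inr (Or.inr (Or.inr ⟨hm0, by omega, h1, h2⟩)))
      have hm1Eq : IsRL (τ ++ [b]) r (m + 1) ↔ b < r := by
        unfold IsRL
        rw [hlen, hlast]
        constructor
        · rintro (⟨_, h⟩ | ⟨h, _⟩ | ⟨_, h, _⟩ | ⟨_, h, _⟩ | ⟨_, h, _⟩)
          · exact h b rfl
          · omega
          · omega
          · omega
          · omega
        · intro h
          exact Or.inl ⟨rfl, by simpa using h⟩
      have hτmEq : IsRL τ r m ↔ a < r := by
        unfold IsRL
        rw [hlastτ, ← hmdef]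
        constructor
        · rintro (⟨_, h⟩ | ⟨h, _⟩ | ⟨_, h, _⟩ | ⟨_, h, _⟩ | ⟨_, h, _⟩)
          · exact h a rfl
          · omega
          · omega
          · omega
          · omega
        · intro h
          exact Or.inl ⟨rfl, by simpa using h⟩
      have hIH := ih r hndτ hrτ
      rw [Finset.card_filter] at hIH ⊢
      rw [hlen, Finset.sum_range_succ, Finset.sum_range_succ]
      rw [Finset.sum_range_succ] at hIH
      have hsum : (∑ i ∈ Finset.range m, if IsRL (τ ++ [b]) r i then 1 else 0) =
          ∑ i ∈ Finset.range m, if IsRL τ r i then 1 else 0 := by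
        apply Finset.sum_congr rfl
        intro i hi
        simp only [Finset.mem_range] at hi
        simp only [hA i hi]
      rw [hsum, hdes, if_congr hmEq rfl rfl, if_congr hm1Eq rfl rfl]
      rw [if_congr hτmEq rfl rfl] at hIH
      split_ifs at hIH ⊢ <;> omega


open scoped Classical in
/-- The number of RL-spaces of `σ` relative to `r` is `des σ + 1`; consequently the
number of LR-spaces is `n - des σ`. -/
theorem rl_space_count (n : ℕ) (σ : List ℕ) (hσl : σ.length = n) (hσnd : σ.Nodup)
    (r : ℕ) (hr : r ∉ σ) :
    ((Finset.range (n + 1)).filter (fun i => IsRL σ r i)).card = des σ + 1 ∧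
    ((Finset.range (n + 1)).filter (fun i => ¬ IsRL σ r i)).card = n - des σ := by
  subst hσl
  have h1 := rl_count σ r hσnd hr
  refine ⟨h1, ?_⟩
  have h2 := Finset.card_filter_add_card_filter_not
    (s := Finset.range (σ.length + 1)) (p := fun i => IsRL σ r i)
  rw [Finset.card_range] at h2
  have h3 : des σ ≤ σ.length := by
    unfold des descents
    calc ((Finset.Ico 1 σ.length).filter _).card ≤ (Finset.Ico 1 σ.length).card :=
          Finset.card_filter_le _ _
      _ = σ.length - 1 := by simp
      _ ≤ σ.length := by omega
  omega
end

section
/- Let σ = σ₁⋯σ_n be a word of length n with des(σ) = k and r a natural number not occurring in σ, and set l = k + 1. Then the map i ↦ im(σ,i,r) = maj(σ^{(i)}(r)) − maj(σ), restricted to the RL-spaces of σ relative to r, is a strictly order-reversing bijection from the RL-spaces onto {0, 1, …, l−1}, and restricted to the LR-spaces it is a strictly order-preserving bijection from the LR-spaces onto {l, l+1, …, n}. In particular, if i is a space with canonical label a (RL-spaces labelled right to left by 0,…,l−1 and LR-spaces labelled left to right by l,…,n), then maj(σ^{(i)}(r)) = a + maj(σ). -/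
open Polynomial List

set_option linter.unusedTactic false in
section
namespace InsAux

/-- dind: contribution of position p to maj -/
def dind (w : List ℕ) (p : ℕ) : ℕ := if w.getD p 0 < w.getD (p - 1) 0 then p else 0

def dbit (w : List ℕ) (p : ℕ) : ℕ := if w.getD p 0 < w.getD (p - 1) 0 then 1 else 0

variable {σ : List ℕ} {r i p m : ℕ}

lemma length_ins (hi : i ≤ σ.length) : (ins σ i r).length = σ.length + 1 :=
  List.length_insertIdx_of_le_length hi r

lemma getD_ins_lt (hi : i ≤ σ.length) (hp : p < i) :
    (ins σ i r).getD p 0 = σ.getD p 0 := by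
  have hp' : p < σ.length := lt_of_lt_of_le hp hi
  rw [List.getD_eq_getElem (l := ins σ i r) (d := 0) (by rw [length_ins hi]; omega),
    List.getD_eq_getElem (hn := hp')]
  exact List.getElem_insertIdx_of_lt hp _

lemma getD_ins_self (hi : i ≤ σ.length) : (ins σ i r).getD i 0 = r := by
  rw [List.getD_eq_getElem (l := ins σ i r) (d := 0) (by rw [length_ins hi]; omega)]
  exact List.getElem_insertIdx_self _

lemma getD_ins_succ (hi : i ≤ σ.length) (hp : i ≤ p) :
    (ins σ i r).getD (p + 1) 0 = σ.getD p 0 := by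
  obtain ⟨k, rfl⟩ : ∃ k, p = i + k := ⟨p - i, by omega⟩
  rcases lt_or_ge (i + k) σ.length with h | h
  · rw [List.getD_eq_getElem (l := ins σ i r) (d := 0) (by rw [length_ins hi]; omega),
      List.getD_eq_getElem (hn := h)]
    exact List.getElem_insertIdx_add_succ σ r i k h
  · rw [List.getD_eq_default (ins σ i r) 0 (n := i + k + 1) (by rw [length_ins hi]; omega),
      List.getD_eq_default σ 0 h]

lemma mem_descents : p ∈ descents σ ↔ (1 ≤ p ∧ p < σ.length) ∧ σ.getD p 0 < σ.getD (p - 1) 0 := by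
  simp [descents, Finset.mem_Ico]

lemma mem_descents' : p ∈ descents σ ↔ p < σ.length ∧ σ.getD p 0 < σ.getD (p - 1) 0 := by
  rw [mem_descents]
  constructor
  · rintro ⟨⟨_, h2⟩, h3⟩; exact ⟨h2, h3⟩
  · rintro ⟨h1, h2⟩
    refine ⟨⟨?_, h1⟩, h2⟩
    rcases Nat.eq_zero_or_pos p with rfl | h
    · simp at h2
    · exact h

lemma maj_eq_sum (w : List ℕ) : maj w = ∑ p ∈ Finset.range w.length, dind w p := by
  rw [maj, descents, Finset.sum_filter, Finset.range_eq_Ico]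
  rcases Nat.eq_zero_or_pos w.length with h | h
  · simp [h]
  · rw [Finset.sum_eq_sum_Ico_succ_bot h]
    have : dind w 0 = 0 := by simp [dind]
    rw [this, zero_add]
    rfl

lemma dge_eq_sum (hm : 1 ≤ m) : dge m σ = ∑ p ∈ Finset.Ico m σ.length, dbit σ p := by
  rw [dge, descents, Finset.filter_filter]
  have : (Finset.Ico 1 σ.length).filter
      (fun j => σ.getD j 0 < σ.getD (j - 1) 0 ∧ m ≤ j) =
      (Finset.Ico m σ.length).filter (fun j => σ.getD j 0 < σ.getD (j - 1) 0) := by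
    ext j
    simp only [Finset.mem_filter, Finset.mem_Ico]
    constructor
    · rintro ⟨⟨h1, h2⟩, h3, h4⟩; exact ⟨⟨h4, h2⟩, h3⟩
    · rintro ⟨⟨h1, h2⟩, h3⟩; exact ⟨⟨by omega, h2⟩, h3, h1⟩
  rw [this, Finset.card_filter]
  rfl

lemma dge_of_ge (h : σ.length ≤ m) : dge m σ = 0 := by
  rw [dge, Finset.card_eq_zero, Finset.filter_eq_empty_iff]
  intro j hj
  have := (mem_descents.1 hj).1.2
  omega
lemma dind_eq_ite_mem (h : p < σ.length) :
    (if p ∈ descents σ then p else 0) = dind σ p := by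
  unfold dind
  by_cases hc : σ.getD p 0 < σ.getD (p - 1) 0
  · rw [if_pos (mem_descents'.2 ⟨h, hc⟩), if_pos hc]
  · rw [if_neg (fun hm => hc (mem_descents'.1 hm).2), if_neg hc]

lemma maj_ins (hi : i ≤ σ.length) :
    maj (ins σ i r) + (if i ∈ descents σ then i else 0) =
      maj σ + dge (i + 1) σ + (if r < σ.getD (i - 1) 0 then i else 0) +
        (if i < σ.length ∧ σ.getD i 0 < r then i + 1 else 0) := by
  have hτl : (ins σ i r).length = σ.length + 1 := length_ins hi
  -- junction term 1
  have e2 : dind (ins σ i r) i = if r < σ.getD (i - 1) 0 then i else 0 := by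
    unfold dind
    rw [getD_ins_self hi]
    rcases Nat.eq_zero_or_pos i with rfl | h0
    · simp
    · rw [getD_ins_lt hi (by omega)]
  have esplitτ : maj (ins σ i r) =
      (∑ p ∈ Finset.Ico 0 i, dind σ p) + dind (ins σ i r) i +
        ∑ p ∈ Finset.Ico (i + 1) (σ.length + 1), dind (ins σ i r) p := by
    rw [maj_eq_sum, hτl, Finset.range_eq_Ico,
      ← Finset.sum_Ico_consecutive _ (Nat.zero_le (i + 1)) (by omega : i + 1 ≤ σ.length + 1),
      Finset.sum_Ico_succ_top (Nat.zero_le i)]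
    congr 2
    refine Finset.sum_congr rfl (fun p hp => ?_)
    have hp' := Finset.mem_Ico.1 hp
    unfold dind
    rw [getD_ins_lt hi (by omega), getD_ins_lt hi (by omega)]
  rcases eq_or_lt_of_le hi with rfl | hin
  · -- i = σ.length
    have h1 : Finset.Ico (σ.length + 1) (σ.length + 1) = ∅ := by simp
    rw [esplitτ, h1, Finset.sum_empty, add_zero, e2]
    have h2 : σ.length ∉ descents σ := fun hm => by
      have := (mem_descents.1 hm).1.2; omega
    rw [if_neg h2, dge_of_ge (by omega), maj_eq_sum σ, Finset.range_eq_Ico]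
    have h3 : ¬ (σ.length < σ.length ∧ σ.getD σ.length 0 < r) := by omega
    rw [if_neg h3]
    omega
  · -- i < σ.length
    have esplitσ : maj σ = (∑ p ∈ Finset.Ico 0 i, dind σ p) + dind σ i +
        ∑ p ∈ Finset.Ico (i + 1) σ.length, dind σ p := by
      rw [maj_eq_sum, Finset.range_eq_Ico,
        ← Finset.sum_Ico_consecutive _ (Nat.zero_le (i + 1)) (by omega : i + 1 ≤ σ.length),
        Finset.sum_Ico_succ_top (Nat.zero_le i)]
    have etail : ∑ p ∈ Finset.Ico (i + 1) (σ.length + 1), dind (ins σ i r) p =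
        (if σ.getD i 0 < r then i + 1 else 0) +
          ∑ p ∈ Finset.Ico (i + 1) σ.length, (dind σ p + dbit σ p) := by
      rw [Finset.sum_eq_sum_Ico_succ_bot (by omega : i + 1 < σ.length + 1)]
      congr 1
      · unfold dind
        rw [getD_ins_succ hi le_rfl]
        have : i + 1 - 1 = i := by omega
        rw [this, getD_ins_self hi]
      · rw [Finset.sum_Ico_eq_sum_range, Finset.sum_Ico_eq_sum_range]
        have hlen : σ.length + 1 - (i + 1 + 1) = σ.length - (i + 1) := by omega
        rw [hlen]
        refine Finset.sum_congr rfl (fun j hj => ?_)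
        have hj' := Finset.mem_range.1 hj
        have h1 : i + 1 + 1 + j = (i + 1 + j) + 1 := by omega
        rw [h1]
        unfold dind dbit
        rw [getD_ins_succ hi (by omega)]
        have h2 : i + 1 + j + 1 - 1 = (i + j) + 1 := by omega
        rw [h2, getD_ins_succ hi (by omega)]
        have h3 : i + 1 + j - 1 = i + j := by omega
        rw [h3]
        split <;> omega
    have edge : dge (i + 1) σ = ∑ p ∈ Finset.Ico (i + 1) σ.length, dbit σ p :=
      dge_eq_sum (by omega)
    have edind : (if i ∈ descents σ then i else 0) = dind σ i := dind_eq_ite_mem hin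
    have ej2 : (if i < σ.length ∧ σ.getD i 0 < r then i + 1 else 0) =
        (if σ.getD i 0 < r then i + 1 else 0) := by
      simp only [hin, true_and]
    rw [esplitτ, etail, e2, esplitσ, edind, ej2, edge, Finset.sum_add_distrib]
    omega
lemma im_eq (hi : i ≤ σ.length) :
    im σ i r = (dge (i + 1) σ : ℤ) + (if r < σ.getD (i - 1) 0 then (i : ℤ) else 0) +
      (if i < σ.length ∧ σ.getD i 0 < r then (i : ℤ) + 1 else 0) -
        (if i ∈ descents σ then (i : ℤ) else 0) := by
  have h := maj_ins (σ := σ) (r := r) hi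
  have hc := congrArg (Nat.cast : ℕ → ℤ) h
  push_cast at hc
  unfold im
  omega
lemma getD_ne_r (hr : r ∉ σ) (hp : p < σ.length) : σ.getD p 0 ≠ r := by
  rw [List.getD_eq_getElem _ _ hp]
  intro h
  exact hr (h ▸ List.getElem_mem hp)

lemma getD_interior_ne (hnd : σ.Nodup) (h0 : 0 < p) (hp : p < σ.length) :
    σ.getD (p - 1) 0 ≠ σ.getD p 0 := by
  rw [List.getD_eq_getElem _ _ hp, List.getD_eq_getElem _ _ (by omega : p - 1 < σ.length)]
  intro h
  have := (hnd.getElem_inj_iff).1 h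
  omega
lemma isRL_zero_iff (h : 0 < σ.length) : IsRL σ r 0 ↔ r < σ.getD 0 0 := by
  have hne : σ ≠ [] := List.ne_nil_of_length_pos h
  have hh : σ.head? = some (σ.getD 0 0) := by
    rw [List.head?_eq_head hne, List.head_eq_getElem_zero hne, List.getD_eq_getElem _ _ h]
  constructor
  · rintro (⟨h1, _⟩ | ⟨_, h2⟩ | ⟨h1, _⟩ | ⟨h1, _⟩ | ⟨h1, _⟩)
    · omega
    · exact h2 _ (by rw [hh]; rfl)
    all_goals omega
  · intro hlt
    exact Or.inr (Or.inl ⟨rfl, fun x hx => by rw [hh] at hx; cases hx; exact hlt⟩)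

lemma isRL_length_iff (h : 0 < σ.length) :
    IsRL σ r σ.length ↔ σ.getD (σ.length - 1) 0 < r := by
  have hne : σ ≠ [] := List.ne_nil_of_length_pos h
  have hh : σ.getLast? = some (σ.getD (σ.length - 1) 0) := by
    rw [List.getLast?_eq_getLast_of_ne_nil hne, List.getLast_eq_getElem,
      List.getD_eq_getElem _ _ (by omega : σ.length - 1 < σ.length)]
  constructor
  · rintro (⟨_, h2⟩ | ⟨h1, _⟩ | ⟨_, h1, _⟩ | ⟨_, h1, _⟩ | ⟨_, h1, _⟩)
    · exact h2 _ (by rw [hh]; rfl)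
    all_goals omega
  · intro hlt
    exact Or.inl ⟨rfl, fun x hx => by rw [hh] at hx; cases hx; exact hlt⟩

lemma isRL_interior_iff (h0 : 0 < i) (h1 : i < σ.length) :
    IsRL σ r i ↔ ((r < σ.getD i 0 ∧ σ.getD i 0 < σ.getD (i - 1) 0) ∨
      (σ.getD i 0 < σ.getD (i - 1) 0 ∧ σ.getD (i - 1) 0 < r) ∨
      (σ.getD (i - 1) 0 < r ∧ r < σ.getD i 0)) := by
  constructor
  · rintro (⟨h2, _⟩ | ⟨h2, _⟩ | ⟨_, _, h⟩ | ⟨_, _, h⟩ | ⟨_, _, h⟩)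
    · omega
    · omega
    · exact Or.inl h
    · exact Or.inr (Or.inl h)
    · exact Or.inr (Or.inr h)
  · rintro (h | h | h)
    · exact Or.inr (Or.inr (Or.inl ⟨h0, h1, h⟩))
    · exact Or.inr (Or.inr (Or.inr (Or.inl ⟨h0, h1, h⟩)))
    · exact Or.inr (Or.inr (Or.inr (Or.inr ⟨h0, h1, h⟩)))

lemma im_RL (hnd : σ.Nodup) (hr : r ∉ σ) (hi : i ≤ σ.length) (h : IsRL σ r i) :
    im σ i r = (dge (i + 1) σ : ℤ) +
      (if i < σ.length ∧ σ.getD i 0 < r then 1 else 0) := by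
  rw [im_eq hi]
  by_cases h0 : i = 0
  · subst h0
    rcases Nat.eq_zero_or_pos σ.length with hl | hl
    · have hout : σ.getD 0 0 = 0 := List.getD_eq_default _ _ (by omega)
      simp only [mem_descents', Nat.zero_sub, hout]
      split_ifs <;> push_cast <;> omega
    · have hrlt : r < σ.getD 0 0 := (isRL_zero_iff hl).1 h
      simp only [mem_descents', Nat.zero_sub]
      split_ifs <;> push_cast <;> omega
  · by_cases hn : i = σ.length
    · subst hn
      have hl : 0 < σ.length := by omega
      have hrlt : σ.getD (σ.length - 1) 0 < r := (isRL_length_iff hl).1 h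
      simp only [mem_descents']
      split_ifs <;> push_cast <;> omega
    · have h0' : 0 < i := by omega
      have h1' : i < σ.length := by omega
      have hab : σ.getD (i - 1) 0 ≠ σ.getD i 0 := getD_interior_ne hnd h0' h1'
      have har : σ.getD (i - 1) 0 ≠ r := getD_ne_r hr (by omega)
      have hbr : σ.getD i 0 ≠ r := getD_ne_r hr h1'
      have hRL' := (isRL_interior_iff h0' h1').1 h
      simp only [mem_descents']
      split_ifs <;> push_cast <;> omega
lemma im_LR (hnd : σ.Nodup) (hr : r ∉ σ) (hi : i ≤ σ.length) (h : ¬ IsRL σ r i) :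
    im σ i r = (i : ℤ) + (dge (i + 1) σ : ℤ) +
      (if i < σ.length ∧ σ.getD i 0 < r then 1 else 0) := by
  rw [im_eq hi]
  by_cases h0 : i = 0
  · subst h0
    rcases Nat.eq_zero_or_pos σ.length with hl | hl
    · exfalso
      apply h
      left
      constructor
      · omega
      · intro x hx
        rw [List.getLast?_eq_none_iff.2 (List.length_eq_zero_iff.1 hl)] at hx
        cases hx
    · have hrlt : ¬ r < σ.getD 0 0 := fun hc => h ((isRL_zero_iff hl).2 hc)
      have hne : σ.getD 0 0 ≠ r := getD_ne_r hr hl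
      simp only [mem_descents', Nat.zero_sub]
      split_ifs <;> push_cast <;> omega
  · by_cases hn : i = σ.length
    · subst hn
      have hl : 0 < σ.length := by omega
      have hrlt : ¬ σ.getD (σ.length - 1) 0 < r := fun hc => h ((isRL_length_iff hl).2 hc)
      have hne : σ.getD (σ.length - 1) 0 ≠ r := getD_ne_r hr (by omega)
      simp only [mem_descents']
      split_ifs <;> push_cast <;> omega
    · have h0' : 0 < i := by omega
      have h1' : i < σ.length := by omega
      have hab : σ.getD (i - 1) 0 ≠ σ.getD i 0 := getD_interior_ne hnd h0' h1'
      have har : σ.getD (i - 1) 0 ≠ r := getD_ne_r hr (by omega)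
      have hbr : σ.getD i 0 ≠ r := getD_ne_r hr h1'
      have hLR' : ¬ ((r < σ.getD i 0 ∧ σ.getD i 0 < σ.getD (i - 1) 0) ∨
          (σ.getD i 0 < σ.getD (i - 1) 0 ∧ σ.getD (i - 1) 0 < r) ∨
          (σ.getD (i - 1) 0 < r ∧ r < σ.getD i 0)) :=
        fun hc => h ((isRL_interior_iff h0' h1').2 hc)
      simp only [mem_descents']
      split_ifs <;> push_cast <;> omega
lemma dge_step (hm : m ≤ σ.length) :
    dge m σ = dge (m + 1) σ + (if m ∈ descents σ then 1 else 0) := by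
  classical
  by_cases hd : m ∈ descents σ
  · have : (descents σ).filter (fun j => m ≤ j) =
        insert m ((descents σ).filter (fun j => m + 1 ≤ j)) := by
      ext j
      simp only [Finset.mem_filter, Finset.mem_insert]
      constructor
      · rintro ⟨h1, h2⟩
        rcases eq_or_lt_of_le h2 with h | h
        · exact Or.inl h.symm
        · exact Or.inr ⟨h1, h⟩
      · rintro (rfl | ⟨h1, h2⟩)
        · exact ⟨hd, le_rfl⟩
        · exact ⟨h1, by omega⟩
    rw [dge, dge, this, if_pos hd,
      Finset.card_insert_of_notMem (fun hc => by
        have := (Finset.mem_filter.1 hc).2; omega)]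
  · have : (descents σ).filter (fun j => m ≤ j) =
        (descents σ).filter (fun j => m + 1 ≤ j) := by
      ext j
      simp only [Finset.mem_filter]
      constructor
      · rintro ⟨h1, h2⟩
        refine ⟨h1, ?_⟩
        rcases eq_or_lt_of_le h2 with h | h
        · exact absurd (h ▸ h1) hd
        · omega
      · rintro ⟨h1, h2⟩; exact ⟨h1, by omega⟩
    rw [dge, dge, this, if_neg hd, add_zero]

lemma dge_one : dge 1 σ = des σ := by
  rw [dge, des]
  congr 1
  apply Finset.filter_true_of_mem
  intro j hj
  exact (mem_descents.1 hj).1.1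

section Counting

open scoped Classical

variable (RL : Finset ℕ) (hRL : ∀ j, j ∈ RL ↔ j ≤ σ.length ∧ IsRL σ r j)

include hRL

lemma count_step (hi : i < σ.length) :
    (RL.filter (fun j => i < j)).card =
      (RL.filter (fun j => i + 1 < j)).card + (if IsRL σ r (i + 1) then 1 else 0) := by
  classical
  by_cases hd : IsRL σ r (i + 1)
  · have : RL.filter (fun j => i < j) =
        insert (i + 1) (RL.filter (fun j => i + 1 < j)) := by
      ext j
      simp only [Finset.mem_filter, Finset.mem_insert]
      constructor
      · rintro ⟨h1, h2⟩
        rcases eq_or_lt_of_le (by omega : i + 1 ≤ j) with h | h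
        · exact Or.inl h.symm
        · exact Or.inr ⟨h1, h⟩
      · rintro (rfl | ⟨h1, h2⟩)
        · exact ⟨(hRL _).2 ⟨by omega, hd⟩, by omega⟩
        · exact ⟨h1, by omega⟩
    rw [this, if_pos hd,
      Finset.card_insert_of_notMem (fun hc => by
        have := (Finset.mem_filter.1 hc).2; omega)]
  · have : RL.filter (fun j => i < j) = RL.filter (fun j => i + 1 < j) := by
      ext j
      simp only [Finset.mem_filter]
      constructor
      · rintro ⟨h1, h2⟩
        refine ⟨h1, ?_⟩
        rcases eq_or_lt_of_le (by omega : i + 1 ≤ j) with h | h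
        · exact absurd ((hRL j).1 (h ▸ h1)).2 (h ▸ hd)
        · omega
      · rintro ⟨h1, h2⟩; exact ⟨h1, by omega⟩
    rw [this, if_neg hd, add_zero]

lemma count_top : (RL.filter (fun j => σ.length < j)).card = 0 := by
  rw [Finset.card_eq_zero, Finset.filter_eq_empty_iff]
  intro j hj
  have := ((hRL j).1 hj).1
  omega
lemma star (hnd : σ.Nodup) (hr : r ∉ σ) :
    ∀ d i, i ≤ σ.length → σ.length - i = d →
      (RL.filter (fun j => i < j)).card =
        dge (i + 1) σ + (if i < σ.length ∧ σ.getD i 0 < r then 1 else 0) := by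
  intro d
  induction d with
  | zero =>
    intro i hi hd
    have : i = σ.length := by omega
    subst this
    rw [count_top RL hRL, dge_of_ge (by omega),
      if_neg (by omega : ¬ (σ.length < σ.length ∧ σ.getD σ.length 0 < r))]
  | succ d ih =>
    intro i hi hd
    have hilt : i < σ.length := by omega
    have hstep := count_step (i := i) RL hRL hilt
    have hih := ih (i + 1) (by omega) (by omega)
    have hdge := dge_step (σ := σ) (m := i + 1) (by omega)
    -- local identity
    have hne_bi : σ.getD i 0 ≠ r := getD_ne_r hr hilt
    have hkey : (if IsRL σ r (i + 1) then 1 else 0) +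
        (if i + 1 < σ.length ∧ σ.getD (i + 1) 0 < r then 1 else 0) =
        (if (i + 1) ∈ descents σ then 1 else 0) +
        (if i < σ.length ∧ σ.getD i 0 < r then 1 else 0) := by
      by_cases hcase : i + 1 = σ.length
      · have hl : 0 < σ.length := by omega
        have hRLiff : IsRL σ r (i + 1) ↔ σ.getD i 0 < r := by
          rw [hcase, isRL_length_iff hl]
          have : σ.length - 1 = i := by omega
          rw [this]
        have hnd2 : (i + 1) ∉ descents σ := fun hm => by
          have := (mem_descents.1 hm).1.2; omega
        simp only [hRLiff, hnd2, if_false,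
          if_neg (by omega : ¬ (i + 1 < σ.length ∧ σ.getD (i + 1) 0 < r))]
        split_ifs <;> omega
      · have h1' : i + 1 < σ.length := by omega
        have hRLiff := isRL_interior_iff (σ := σ) (r := r) (i := i + 1) (by omega) h1'
        have := Nat.add_sub_cancel (n := i) (m := 1)
        rw [this] at hRLiff
        have hab : σ.getD i 0 ≠ σ.getD (i + 1) 0 := by
          have := getD_interior_ne hnd (p := i + 1) (by omega) h1'
          rwa [Nat.add_sub_cancel] at this
        have har : σ.getD i 0 ≠ r := hne_bi
        have hbr : σ.getD (i + 1) 0 ≠ r := getD_ne_r hr h1'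
        have hmD : (i + 1) ∈ descents σ ↔ σ.getD (i + 1) 0 < σ.getD i 0 := by
          rw [mem_descents']
          have := Nat.add_sub_cancel (n := i) (m := 1)
          rw [this]
          omega
        simp only [hRLiff, hmD]
        split_ifs <;> omega
    omega
lemma card_RL (hnd : σ.Nodup) (hr : r ∉ σ) : RL.card = des σ + 1 := by
  classical
  have h0 := star RL hRL hnd hr σ.length 0 (by omega) rfl
  have hsplit : RL.card = (RL.filter (fun j => 0 < j)).card + (if IsRL σ r 0 then 1 else 0) := by
    by_cases hd : IsRL σ r 0
    · have : RL = insert 0 (RL.filter (fun j => 0 < j)) := by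
        ext j
        simp only [Finset.mem_filter, Finset.mem_insert]
        constructor
        · intro h1
          rcases Nat.eq_zero_or_pos j with rfl | h
          · exact Or.inl rfl
          · exact Or.inr ⟨h1, h⟩
        · rintro (rfl | ⟨h1, _⟩)
          · exact (hRL _).2 ⟨by omega, hd⟩
          · exact h1
      rw [if_pos hd]
      conv_lhs => rw [this]
      rw [Finset.card_insert_of_notMem (fun hc => by
        have := (Finset.mem_filter.1 hc).2; omega)]
    · have : RL = RL.filter (fun j => 0 < j) := by
        ext j
        simp only [Finset.mem_filter]
        constructor
        · intro h1
          refine ⟨h1, ?_⟩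
          rcases Nat.eq_zero_or_pos j with rfl | h
          · exact absurd ((hRL 0).1 h1).2 hd
          · exact h
        · exact fun h => h.1
      rw [if_neg hd, add_zero]
      exact congrArg Finset.card this
  rw [hsplit, h0, dge_one]
  rcases Nat.eq_zero_or_pos σ.length with hl | hl
  · have hRL0 : IsRL σ r 0 := by
      left
      refine ⟨by omega, fun x hx => ?_⟩
      rw [List.getLast?_eq_none_iff.2 (List.length_eq_zero_iff.1 hl)] at hx
      cases hx
    rw [if_pos hRL0, if_neg (by omega : ¬ (0 < σ.length ∧ σ.getD 0 0 < r))]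
  · have hne : σ.getD 0 0 ≠ r := getD_ne_r hr hl
    rw [isRL_zero_iff hl]
    split_ifs <;> omega
lemma master_RL (hnd : σ.Nodup) (hr : r ∉ σ) (hi : i ≤ σ.length) (h : IsRL σ r i) :
    im σ i r = ((RL.filter (fun j => i < j)).card : ℤ) := by
  have hs := star RL hRL hnd hr (σ.length - i) i hi rfl
  have hc := congrArg (Nat.cast : ℕ → ℤ) hs
  push_cast at hc
  rw [im_RL hnd hr hi h, hc]

lemma master_LR (hnd : σ.Nodup) (hr : r ∉ σ) (hi : i ≤ σ.length) (h : ¬ IsRL σ r i) :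
    im σ i r = (i : ℤ) + ((RL.filter (fun j => i < j)).card : ℤ) := by
  have hs := star RL hRL hnd hr (σ.length - i) i hi rfl
  have hc := congrArg (Nat.cast : ℕ → ℤ) hs
  push_cast at hc
  rw [im_LR hnd hr hi h, hc]
  ring

end Counting

lemma main_aux (σ : List ℕ) (hσnd : σ.Nodup) (r : ℕ) (hr : r ∉ σ)
    (RL LR : Finset ℕ)
    (hRL : ∀ j, j ∈ RL ↔ j ≤ σ.length ∧ IsRL σ r j)
    (hLR : ∀ j, j ∈ LR ↔ j ≤ σ.length ∧ ¬ IsRL σ r j) :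
    (∀ i ∈ RL, ∀ j ∈ RL, i < j → im σ j r < im σ i r) ∧
    RL.image (fun i => im σ i r) = Finset.Icc (0 : ℤ) (des σ : ℤ) ∧
    (∀ i ∈ LR, ∀ j ∈ LR, i < j → im σ i r < im σ j r) ∧
    LR.image (fun i => im σ i r) = Finset.Icc ((des σ : ℤ) + 1) (σ.length : ℤ) ∧
    (∀ i ∈ RL, im σ i r = ((RL.filter (fun j => i < j)).card : ℤ)) ∧
    (∀ i ∈ LR, im σ i r = (des σ : ℤ) + 1 + ((LR.filter (fun j => j < i)).card : ℤ)) := by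
  classical
  have hcardRL : RL.card = des σ + 1 := card_RL RL hRL hσnd hr
  have hRLsub : RL ⊆ Finset.range (σ.length + 1) := fun j hj =>
    Finset.mem_range.2 (by have := ((hRL j).1 hj).1; omega)
  have hLRsub : LR ⊆ Finset.range (σ.length + 1) := fun j hj =>
    Finset.mem_range.2 (by have := ((hLR j).1 hj).1; omega)
  have hdisj : Disjoint RL LR := by
    rw [Finset.disjoint_left]
    intro j hj1 hj2
    exact ((hLR j).1 hj2).2 ((hRL j).1 hj1).2
  have hunion : RL ∪ LR = Finset.range (σ.length + 1) := by
    ext j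
    simp only [Finset.mem_union, Finset.mem_range, hRL, hLR]
    constructor
    · rintro (⟨h, _⟩ | ⟨h, _⟩) <;> omega
    · intro h
      by_cases hc : IsRL σ r j
      · exact Or.inl ⟨by omega, hc⟩
      · exact Or.inr ⟨by omega, hc⟩
  have hcards : RL.card + LR.card = σ.length + 1 := by
    rw [← Finset.card_union_of_disjoint hdisj, hunion, Finset.card_range]
  have hdes_le : des σ ≤ σ.length := by
    have := Finset.card_le_card hRLsub
    rw [hcardRL, Finset.card_range] at this
    omega
  have hcardLR : LR.card = σ.length - des σ := by omega
  -- part 1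
  have p1 : ∀ i ∈ RL, ∀ j ∈ RL, i < j → im σ j r < im σ i r := by
    intro i hi j hj hij
    obtain ⟨hi1, hi2⟩ := (hRL i).1 hi
    obtain ⟨hj1, hj2⟩ := (hRL j).1 hj
    rw [master_RL RL hRL hσnd hr hi1 hi2, master_RL RL hRL hσnd hr hj1 hj2]
    have hsub : insert j (RL.filter (fun t => j < t)) ⊆ RL.filter (fun t => i < t) := by
      intro t ht
      rcases Finset.mem_insert.1 ht with rfl | ht'
      · exact Finset.mem_filter.2 ⟨hj, hij⟩
      · obtain ⟨ht1, ht2⟩ := Finset.mem_filter.1 ht'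
        exact Finset.mem_filter.2 ⟨ht1, by omega⟩
    have hcard := Finset.card_le_card hsub
    rw [Finset.card_insert_of_notMem (fun hc => by
      have := (Finset.mem_filter.1 hc).2; omega)] at hcard
    exact_mod_cast by omega
  -- part 3
  have p3 : ∀ i ∈ LR, ∀ j ∈ LR, i < j → im σ i r < im σ j r := by
    intro i hi j hj hij
    obtain ⟨hi1, hi2⟩ := (hLR i).1 hi
    obtain ⟨hj1, hj2⟩ := (hLR j).1 hj
    rw [master_LR RL hRL hσnd hr hi1 hi2, master_LR RL hRL hσnd hr hj1 hj2]
    have hsub : RL.filter (fun t => i < t) ⊆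
        (RL.filter (fun t => j < t)) ∪ Finset.Ico (i + 1) j := by
      intro t ht
      obtain ⟨ht1, ht2⟩ := Finset.mem_filter.1 ht
      rcases lt_or_ge j t with h | h
      · exact Finset.mem_union_left _ (Finset.mem_filter.2 ⟨ht1, h⟩)
      · have htj : t ≠ j := fun hc => hj2 (hc ▸ ((hRL t).1 ht1).2)
        exact Finset.mem_union_right _ (Finset.mem_Ico.2 ⟨by omega, by omega⟩)
    have hcard := Finset.card_le_card hsub
    have := Finset.card_union_le (RL.filter (fun t => j < t)) (Finset.Ico (i + 1) j)
    rw [Nat.card_Ico] at this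
    have h1 : (RL.filter (fun t => i < t)).card ≤
        (RL.filter (fun t => j < t)).card + (j - (i + 1)) := le_trans hcard this
    push_cast
    omega
  -- helper facts for parts 2,4,6
  have hSi_le : ∀ i ∈ RL, (RL.filter (fun j => i < j)).card ≤ des σ := by
    intro i hi
    have hsub : RL.filter (fun j => i < j) ⊆ RL.erase i := by
      intro t ht
      obtain ⟨ht1, ht2⟩ := Finset.mem_filter.1 ht
      exact Finset.mem_erase.2 ⟨by omega, ht1⟩
    have := Finset.card_le_card hsub
    rw [Finset.card_erase_of_mem hi, hcardRL] at this
    omega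
  have hf2 : ∀ i, i ∉ RL → (RL.filter (fun j => j < i)).card +
      (RL.filter (fun j => i < j)).card = des σ + 1 := by
    intro i hiRL
    have hdisj2 : Disjoint (RL.filter (fun j => j < i)) (RL.filter (fun j => i < j)) := by
      rw [Finset.disjoint_left]
      intro t ht1 ht2
      have := (Finset.mem_filter.1 ht1).2
      have := (Finset.mem_filter.1 ht2).2
      omega
    have huni2 : (RL.filter (fun j => j < i)) ∪ (RL.filter (fun j => i < j)) = RL := by
      ext t
      simp only [Finset.mem_union, Finset.mem_filter]
      constructor
      · rintro (⟨h, _⟩ | ⟨h, _⟩) <;> exact h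
      · intro h
        have hti : t ≠ i := fun hc => hiRL (hc ▸ h)
        rcases lt_or_gt_of_ne hti with h' | h'
        · exact Or.inl ⟨h, h'⟩
        · exact Or.inr ⟨h, h'⟩
    rw [← hcardRL, ← Finset.card_union_of_disjoint hdisj2, huni2]
  have hSi_len : ∀ i, (RL.filter (fun j => i < j)).card ≤ σ.length - i := by
    intro i
    have hsub : RL.filter (fun j => i < j) ⊆ Finset.Ico (i + 1) (σ.length + 1) := by
      intro t ht
      obtain ⟨ht1, ht2⟩ := Finset.mem_filter.1 ht
      have := ((hRL t).1 ht1).1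
      exact Finset.mem_Ico.2 ⟨by omega, by omega⟩
    have := Finset.card_le_card hsub
    rwa [Nat.card_Ico, Nat.add_sub_add_right] at this
  have hRLlt_le : ∀ i, (RL.filter (fun j => j < i)).card ≤ i := by
    intro i
    have hsub : RL.filter (fun j => j < i) ⊆ Finset.range i := by
      intro t ht
      exact Finset.mem_range.2 (Finset.mem_filter.1 ht).2
    have := Finset.card_le_card hsub
    rwa [Finset.card_range] at this
  -- part 5
  have p5 : ∀ i ∈ RL, im σ i r = ((RL.filter (fun j => i < j)).card : ℤ) := by
    intro i hi
    obtain ⟨hi1, hi2⟩ := (hRL i).1 hi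
    exact master_RL RL hRL hσnd hr hi1 hi2
  -- part 6
  have p6 : ∀ i ∈ LR, im σ i r = (des σ : ℤ) + 1 + ((LR.filter (fun j => j < i)).card : ℤ) := by
    intro i hi
    obtain ⟨hi1, hi2⟩ := (hLR i).1 hi
    rw [master_LR RL hRL hσnd hr hi1 hi2]
    have hiRL : i ∉ RL := fun hc => hi2 ((hRL i).1 hc).2
    have hf2i := hf2 i hiRL
    have hf1 : (RL.filter (fun j => j < i)).card + (LR.filter (fun j => j < i)).card = i := by
      have hd3 : Disjoint (RL.filter (fun j => j < i)) (LR.filter (fun j => j < i)) := by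
        rw [Finset.disjoint_left]
        intro t ht1 ht2
        exact ((hLR t).1 (Finset.mem_filter.1 ht2).1).2
          ((hRL t).1 (Finset.mem_filter.1 ht1).1).2
      have hu3 : (RL.filter (fun j => j < i)) ∪ (LR.filter (fun j => j < i)) =
          Finset.range i := by
        ext t
        simp only [Finset.mem_union, Finset.mem_filter, Finset.mem_range, hRL, hLR]
        constructor
        · rintro (⟨_, h⟩ | ⟨_, h⟩) <;> exact h
        · intro h
          by_cases hc : IsRL σ r t
          · exact Or.inl ⟨⟨by omega, hc⟩, h⟩
          · exact Or.inr ⟨⟨by omega, hc⟩, h⟩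
      have := Finset.card_union_of_disjoint hd3
      rw [hu3, Finset.card_range] at this
      omega
    push_cast
    omega
  -- part 2
  have hinjRL : Set.InjOn (fun i => im σ i r) RL := by
    intro i hi j hj hij
    have hij' : im σ i r = im σ j r := hij
    by_contra hne
    rcases lt_trichotomy i j with h | h | h
    · have := p1 i hi j hj h; omega
    · exact hne h
    · have := p1 j hj i hi h; omega
  have p2 : RL.image (fun i => im σ i r) = Finset.Icc (0 : ℤ) (des σ : ℤ) := by
    apply Finset.eq_of_subset_of_card_le
    · intro x hx
      obtain ⟨i, hi, rfl⟩ := Finset.mem_image.1 hx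
      obtain ⟨hi1, hi2⟩ := (hRL i).1 hi
      rw [master_RL RL hRL hσnd hr hi1 hi2]
      have := hSi_le i hi
      rw [Finset.mem_Icc]
      constructor
      · positivity
      · exact_mod_cast this
    · rw [Finset.card_image_of_injOn hinjRL, hcardRL, Int.card_Icc]
      omega
  -- part 4
  have hinjLR : Set.InjOn (fun i => im σ i r) LR := by
    intro i hi j hj hij
    have hij' : im σ i r = im σ j r := hij
    by_contra hne
    rcases lt_trichotomy i j with h | h | h
    · have := p3 i hi j hj h; omega
    · exact hne h
    · have := p3 j hj i hi h; omega
  have p4 : LR.image (fun i => im σ i r) = Finset.Icc ((des σ : ℤ) + 1) (σ.length : ℤ) := by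
    apply Finset.eq_of_subset_of_card_le
    · intro x hx
      obtain ⟨i, hi, rfl⟩ := Finset.mem_image.1 hx
      obtain ⟨hi1, hi2⟩ := (hLR i).1 hi
      rw [master_LR RL hRL hσnd hr hi1 hi2]
      have hiRL : i ∉ RL := fun hc => hi2 ((hRL i).1 hc).2
      have h1 := hf2 i hiRL
      have h2 := hSi_len i
      have h3 := hRLlt_le i
      rw [Finset.mem_Icc]
      constructor
      · push_cast; omega
      · push_cast; omega
    · rw [Finset.card_image_of_injOn hinjLR, hcardLR, Int.card_Icc]
      omega
  exact ⟨p1, p2, p3, p4, p5, p6⟩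

end InsAux

end

open scoped Classical in
/-- **The Insertion Lemma** (Haglund–Loehr–Remmel).  With `l = k + 1`, the major
increment `i ↦ im(σ,i,r)` is a strictly order-reversing bijection from the RL-spaces
onto `{0, …, l-1}` and a strictly order-preserving bijection from the LR-spaces onto
`{l, …, n}`; in particular, a space with canonical label `a` (RL-spaces labelled right
to left by `0,…,l-1`, LR-spaces labelled left to right by `l,…,n`) satisfies
`maj(σ^{(i)}(r)) = a + maj(σ)`. -/
theorem insertion_lemma (n k : ℕ) (σ : List ℕ) (hσl : σ.length = n) (hσnd : σ.Nodup)
    (hk : des σ = k) (r : ℕ) (hr : r ∉ σ) :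
    letI RL : Finset ℕ := (Finset.range (n + 1)).filter (fun i => IsRL σ r i)
    letI LR : Finset ℕ := (Finset.range (n + 1)).filter (fun i => ¬ IsRL σ r i)
    (∀ i ∈ RL, ∀ j ∈ RL, i < j → im σ j r < im σ i r) ∧
    RL.image (fun i => im σ i r) = Finset.Icc (0 : ℤ) (k : ℤ) ∧
    (∀ i ∈ LR, ∀ j ∈ LR, i < j → im σ i r < im σ j r) ∧
    LR.image (fun i => im σ i r) = Finset.Icc ((k : ℤ) + 1) (n : ℤ) ∧
    (∀ i ∈ RL, im σ i r = ((RL.filter (fun j => i < j)).card : ℤ)) ∧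
    (∀ i ∈ LR, im σ i r = (k : ℤ) + 1 + ((LR.filter (fun j => j < i)).card : ℤ)) := by
  subst hσl hk
  exact InsAux.main_aux σ hσnd r hr
    ((Finset.range (σ.length + 1)).filter (fun i => IsRL σ r i))
    ((Finset.range (σ.length + 1)).filter (fun i => ¬ IsRL σ r i))
    (fun j => by simp [Finset.mem_filter, Finset.mem_range, Nat.lt_succ_iff])
    (fun j => by simp [Finset.mem_filter, Finset.mem_range, Nat.lt_succ_iff])
end

section
/- Let σ be a word of length n with des(σ) = k and r a natural number not occurring in σ. Then the major increment sequence MIS(σ,r) = (im(σ,0,r), im(σ,1,r), …, im(σ,n,r)) is a shuffle of the increasing sequence k+1, k+2, …, n and the decreasing sequence k, k−1, …, 1, 0; that is, it is a sequence of length n+1 whose entries are a permutation of {0,1,…,n} containing k+1, k+2, …, n as a subsequence and k, k−1, …, 1, 0 as a subsequence. -/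
open Polynomial List

lemma getD_ins (σ : List ℕ) (i r : ℕ) (hi : i ≤ σ.length) (j : ℕ) (hj : j < σ.length + 1) :
    (σ.insertIdx i r).getD j 0 =
      if j < i then σ.getD j 0 else if j = i then r else σ.getD (j-1) 0 := by
  have hlen : (σ.insertIdx i r).length = σ.length + 1 := List.length_insertIdx_of_le_length hi r
  rcases lt_trichotomy j i with h | h | h
  · rw [if_pos h]
    have hjl : j < σ.length := lt_of_lt_of_le h hi
    rw [List.getD_eq_getElem _ _ (by omega : j < (σ.insertIdx i r).length),
        List.getD_eq_getElem _ _ hjl]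
    exact List.getElem_insertIdx_of_lt h (by omega)
  · rw [if_neg (by omega), if_pos h, h]
    rw [List.getD_eq_getElem _ _ (by omega : i < (σ.insertIdx i r).length)]
    exact List.getElem_insertIdx_self (by omega)
  · rw [if_neg (by omega), if_neg (by omega)]
    have hj1 : j - 1 < σ.length := by omega
    rw [List.getD_eq_getElem _ _ (by omega : j < (σ.insertIdx i r).length),
        List.getD_eq_getElem _ _ hj1]
    have hrepr : j = i + (j - 1 - i) + 1 := by omega
    have := List.getElem_insertIdx_add_succ σ r i (j - 1 - i) (by omega)
      (by omega)
    convert this using 2 <;> omega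

lemma maj_eq_sum (w : List ℕ) :
    maj w = ∑ j ∈ Finset.range w.length, if w.getD j 0 < w.getD (j-1) 0 then j else 0 := by
  rw [maj, descents, Finset.sum_filter]
  apply Finset.sum_subset
  · intro x hx
    rw [Finset.mem_Ico] at hx
    exact Finset.mem_range.2 hx.2
  · intro x hx hx'
    rw [Finset.mem_range] at hx
    rw [Finset.mem_Ico] at hx'
    have : x = 0 := by omega
    subst this
    simp

lemma maj_ins (σ : List ℕ) (r i : ℕ) (hi : i ≤ σ.length) :
    maj (ins σ i r) =
      ((∑ j ∈ (descents σ).filter (fun j => j < i), j) +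
       (∑ j ∈ (descents σ).filter (fun j => i < j), (j+1))) +
      ((if 1 ≤ i ∧ r < σ.getD (i-1) 0 then i else 0) +
       (if i < σ.length ∧ σ.getD i 0 < r then i+1 else 0)) := by
  have hlen : (σ.insertIdx i r).length = σ.length + 1 := List.length_insertIdx_of_le_length hi r
  rw [ins, maj_eq_sum, hlen]
  have key : ∀ j ∈ Finset.range (σ.length+1),
      (if (σ.insertIdx i r).getD j 0 < (σ.insertIdx i r).getD (j-1) 0 then j else 0) =
      ((if j < i ∧ σ.getD j 0 < σ.getD (j-1) 0 then j else 0) +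
       (if i+1 < j ∧ σ.getD (j-1) 0 < σ.getD (j-2) 0 then j else 0)) +
      ((if j = i then (if 1 ≤ i ∧ r < σ.getD (i-1) 0 then i else 0) else 0) +
       (if j = i+1 then (if i < σ.length ∧ σ.getD i 0 < r then i+1 else 0) else 0)) := by
    intro j hj
    rw [Finset.mem_range] at hj
    rcases lt_trichotomy j i with h | h | h
    · have e1 : (σ.insertIdx i r).getD j 0 = σ.getD j 0 := by
        rw [getD_ins σ i r hi j (by omega), if_pos h]
      have e2 : (σ.insertIdx i r).getD (j-1) 0 = σ.getD (j-1) 0 := by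
        rw [getD_ins σ i r hi (j-1) (by omega), if_pos (by omega)]
      rw [e1, e2]; split_ifs <;> omega
    · have e1 : (σ.insertIdx i r).getD j 0 = r := by
        rw [getD_ins σ i r hi j (by omega), if_neg (by omega), if_pos h]
      rcases Nat.eq_zero_or_pos i with h0 | h0
      · have e2 : (σ.insertIdx i r).getD (j-1) 0 = r := by
          rw [getD_ins σ i r hi (j-1) (by omega), if_neg (by omega), if_pos (by omega)]
        rw [e1, e2]; split_ifs <;> omega
      · have e2 : (σ.insertIdx i r).getD (j-1) 0 = σ.getD (j-1) 0 := by
          rw [getD_ins σ i r hi (j-1) (by omega), if_pos (by omega)]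
        have hji : j - 1 = i - 1 := by omega
        rw [e1, e2, hji]; split_ifs <;> omega
    · have e1 : (σ.insertIdx i r).getD j 0 = σ.getD (j-1) 0 := by
        rw [getD_ins σ i r hi j (by omega), if_neg (by omega), if_neg (by omega)]
      rcases Nat.eq_or_lt_of_le (by omega : i + 1 ≤ j) with he | hgt
      · have e2 : (σ.insertIdx i r).getD (j-1) 0 = r := by
          rw [getD_ins σ i r hi (j-1) (by omega), if_neg (by omega), if_pos (by omega)]
        have hji : j - 1 = i := by omega
        rw [e1, e2, hji]; split_ifs <;> omega
      · have e2 : (σ.insertIdx i r).getD (j-1) 0 = σ.getD (j-2) 0 := by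
          rw [getD_ins σ i r hi (j-1) (by omega), if_neg (by omega), if_neg (by omega),
            (by omega : j - 1 - 1 = j - 2)]
        rw [e1, e2]; split_ifs <;> omega
  rw [Finset.sum_congr rfl key]
  rw [Finset.sum_add_distrib, Finset.sum_add_distrib, Finset.sum_add_distrib]
  have hG1 : ∑ x ∈ Finset.range (σ.length+1),
      (if x < i ∧ σ.getD x 0 < σ.getD (x-1) 0 then x else 0) =
      ∑ j ∈ (descents σ).filter (fun j => j < i), j := by
    rw [descents, Finset.filter_filter, Finset.sum_filter]
    rw [Finset.sum_congr rfl (fun x _ => if_congr and_comm rfl rfl :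
      ∀ x ∈ Finset.Ico 1 σ.length, (if σ.getD x 0 < σ.getD (x-1) 0 ∧ x < i then x else 0)
        = if x < i ∧ σ.getD x 0 < σ.getD (x-1) 0 then x else 0)]
    symm
    apply Finset.sum_subset
    · intro x hx; rw [Finset.mem_Ico] at hx; rw [Finset.mem_range]; omega
    · intro x hx hx'
      rw [Finset.mem_range] at hx; rw [Finset.mem_Ico] at hx'
      rcases (by omega : x = 0 ∨ x = σ.length) with h | h <;> subst h
      · simp
      · rw [if_neg]; rintro ⟨h1, _⟩; omega
  have hG4 : ∑ x ∈ Finset.range (σ.length+1),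
      (if i+1 < x ∧ σ.getD (x-1) 0 < σ.getD (x-2) 0 then x else 0) =
      ∑ j ∈ (descents σ).filter (fun j => i < j), (j+1) := by
    rw [Finset.sum_range_succ']
    have h0 : (if i + 1 < 0 ∧ σ.getD (0-1) 0 < σ.getD (0-2) 0 then 0 else 0) = 0 := by
      simp
    rw [h0, add_zero]
    rw [Finset.sum_congr rfl (fun x _ => by
      rw [(by omega : x + 1 - 1 = x), (by omega : x + 1 - 2 = x - 1)]
      exact if_congr (and_congr (by omega) Iff.rfl) rfl rfl :
      ∀ x ∈ Finset.range σ.length,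
        (if i + 1 < x + 1 ∧ σ.getD (x+1-1) 0 < σ.getD (x+1-2) 0 then x + 1 else 0)
        = if i < x ∧ σ.getD x 0 < σ.getD (x-1) 0 then x + 1 else 0)]
    rw [descents, Finset.filter_filter, Finset.sum_filter]
    rw [Finset.sum_congr rfl (fun x _ => if_congr and_comm rfl rfl :
      ∀ x ∈ Finset.Ico 1 σ.length, (if σ.getD x 0 < σ.getD (x-1) 0 ∧ i < x then x + 1 else 0)
        = if i < x ∧ σ.getD x 0 < σ.getD (x-1) 0 then x + 1 else 0)]
    symm
    apply Finset.sum_subset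
    · intro x hx; rw [Finset.mem_Ico] at hx; rw [Finset.mem_range]; omega
    · intro x hx hx'
      rw [Finset.mem_range] at hx; rw [Finset.mem_Ico] at hx'
      have : x = 0 := by omega
      subst this
      rw [if_neg]; rintro ⟨h1, _⟩; omega
  have hG2 : ∑ x ∈ Finset.range (σ.length+1),
      (if x = i then (if 1 ≤ i ∧ r < σ.getD (i-1) 0 then i else 0) else 0) =
      (if 1 ≤ i ∧ r < σ.getD (i-1) 0 then i else 0) := by
    rw [Finset.sum_ite_eq' (Finset.range (σ.length+1)) i]
    rw [if_pos (Finset.mem_range.2 (by omega))]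
  have hG3 : ∑ x ∈ Finset.range (σ.length+1),
      (if x = i+1 then (if i < σ.length ∧ σ.getD i 0 < r then i+1 else 0) else 0) =
      (if i < σ.length ∧ σ.getD i 0 < r then i+1 else 0) := by
    rw [Finset.sum_ite_eq' (Finset.range (σ.length+1)) (i+1)]
    by_cases hin : i < σ.length
    · rw [if_pos (Finset.mem_range.2 (by omega))]
    · rw [if_neg (by rw [Finset.mem_range]; omega), if_neg (by tauto)]
  rw [hG1, hG4, hG2, hG3]

lemma mem_descents_iff (σ : List ℕ) (i : ℕ) :
    i ∈ descents σ ↔ 0 < i ∧ i < σ.length ∧ σ.getD i 0 < σ.getD (i-1) 0 := by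
  rw [descents, Finset.mem_filter, Finset.mem_Ico]
  constructor
  · rintro ⟨⟨h1, h2⟩, h3⟩; exact ⟨h1, h2, h3⟩
  · rintro ⟨h1, h2, h3⟩; exact ⟨⟨h1, h2⟩, h3⟩

lemma maj_split (σ : List ℕ) (i : ℕ) :
    maj σ = (∑ j ∈ (descents σ).filter (fun j => j < i), j) +
      ((∑ j ∈ (descents σ).filter (fun j => i < j), j) +
       (if 0 < i ∧ i < σ.length ∧ σ.getD i 0 < σ.getD (i-1) 0 then i else 0)) := by
  rw [maj, ← Finset.sum_filter_add_sum_filter_not (descents σ) (fun j => j < i)]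
  congr 1
  have : ∀ j ∈ (descents σ).filter (fun j => ¬ j < i), j
      = (if i < j then j else 0) + (if j = i then j else 0) := by
    intro j hj
    rw [Finset.mem_filter] at hj
    have := hj.2
    split_ifs <;> omega
  rw [Finset.sum_congr rfl this, Finset.sum_add_distrib]
  congr 1
  · rw [Finset.sum_filter, Finset.sum_filter]
    apply Finset.sum_congr rfl
    intro x _
    split_ifs <;> omega
  · rw [Finset.sum_filter, Finset.sum_congr rfl
      (fun x _ => by split_ifs <;> omega :
        ∀ x ∈ descents σ, (if ¬ x < i then (if x = i then x else 0) else 0) = if x = i then x else 0)]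
    rw [Finset.sum_ite_eq' (descents σ) i]
    by_cases h : i ∈ descents σ
    · rw [if_pos h, if_pos ((mem_descents_iff σ i).1 h)]
    · rw [if_neg h, if_neg (fun hc => h ((mem_descents_iff σ i).2 hc))]

lemma dge_eq_card (σ : List ℕ) (i : ℕ) :
    dge (i+1) σ = ((descents σ).filter (fun j => i < j)).card := rfl

lemma im_eq (σ : List ℕ) (r i : ℕ) (hi : i ≤ σ.length) :
    im σ i r = (dge (i+1) σ : ℤ)
      + (if 1 ≤ i ∧ r < σ.getD (i-1) 0 then (i:ℤ) else 0)
      + (if i < σ.length ∧ σ.getD i 0 < r then (i:ℤ)+1 else 0)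
      - (if 0 < i ∧ i < σ.length ∧ σ.getD i 0 < σ.getD (i-1) 0 then (i:ℤ) else 0) := by
  rw [im, maj_ins σ r i hi, maj_split σ i, dge_eq_card]
  have hsum : ∑ j ∈ (descents σ).filter (fun j => i < j), (j+1)
      = (∑ j ∈ (descents σ).filter (fun j => i < j), j)
        + ((descents σ).filter (fun j => i < j)).card := by
    rw [Finset.sum_add_distrib, Finset.sum_const, smul_eq_mul, mul_one]
  rw [hsum]
  push_cast
  split_ifs <;> push_cast <;> ring

def Tf (σ : List ℕ) (r j : ℕ) : ℕ := if j ≤ σ.length ∧ σ.getD (j-1) 0 < r then 1 else 0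

lemma ne_getD (σ : List ℕ) (r : ℕ) (hr : r ∉ σ) (j : ℕ) (hj : j < σ.length) :
    r ≠ σ.getD j 0 := by
  rw [List.getD_eq_getElem _ _ hj]
  exact fun h => hr (h ▸ List.getElem_mem hj)

lemma getD_ne (σ : List ℕ) (hnd : σ.Nodup) (i : ℕ) (h0 : 0 < i) (hl : i < σ.length) :
    σ.getD i 0 ≠ σ.getD (i-1) 0 := by
  rw [List.getD_eq_getElem _ _ hl, List.getD_eq_getElem _ _ (by omega)]
  intro h
  rw [hnd.getElem_inj_iff] at h
  omega

lemma head_lt_iff (σ : List ℕ) (r : ℕ) :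
    (∀ x ∈ σ.head?, r < x) ↔ (σ.length = 0 ∨ r < σ.getD 0 0) := by
  rw [List.head?_eq_getElem?]
  rcases Nat.eq_zero_or_pos σ.length with h | h
  · rw [List.getElem?_eq_none (by omega)]
    simp [h]
  · rw [List.getElem?_eq_getElem (by omega), List.getD_eq_getElem _ _ (by omega)]
    simp only [Option.mem_some_iff]
    constructor
    · intro hx; right; exact hx _ rfl
    · rintro (h0 | h0)
      · omega
      · intro x hx; rw [← hx]; exact h0

lemma last_lt_iff (σ : List ℕ) (r : ℕ) :
    (∀ x ∈ σ.getLast?, x < r) ↔ (σ.length = 0 ∨ σ.getD (σ.length - 1) 0 < r) := by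
  rw [List.getLast?_eq_getElem?]
  rcases Nat.eq_zero_or_pos σ.length with h | h
  · rw [List.getElem?_eq_none (by omega)]
    simp [h]
  · rw [List.getElem?_eq_getElem (by omega), List.getD_eq_getElem _ _ (by omega)]
    simp only [Option.mem_some_iff]
    constructor
    · intro hx; right; exact hx _ rfl
    · rintro (h0 | h0)
      · omega
      · intro x hx; rw [← hx]; exact h0

open Classical in
lemma key1 (σ : List ℕ) (r : ℕ) (hnd : σ.Nodup) (hr : r ∉ σ) (i : ℕ) (hi : i ≤ σ.length) :
    im σ i r = (if IsRL σ r i then 0 else (i:ℤ)) + dge (i+1) σ + Tf σ r (i+1) := by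
  rw [im_eq σ r i hi, Tf]
  simp only [Nat.add_sub_cancel]
  rcases Nat.eq_zero_or_pos σ.length with hn0 | hn0
  · have hi0 : i = 0 := by omega
    subst hi0
    have hRL : IsRL σ r 0 := Or.inl ⟨by omega, by rw [last_lt_iff]; left; exact hn0⟩
    rw [if_pos hRL]
    split_ifs <;> omega
  · rcases Nat.eq_zero_or_pos i with hi0 | hi0
    · subst hi0
      have hb := ne_getD σ r hr 0 (by omega)
      rcases lt_or_gt_of_ne hb with hc | hc
      · have hRL : IsRL σ r 0 := Or.inr (Or.inl ⟨rfl, by rw [head_lt_iff]; right; exact hc⟩)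
        rw [if_pos hRL]
        split_ifs <;> omega
      · have hRL : ¬ IsRL σ r 0 := by
          rintro (⟨h1, _⟩ | ⟨_, h2⟩ | ⟨h1, _⟩ | ⟨h1, _⟩ | ⟨h1, _⟩)
          · omega
          · rw [head_lt_iff] at h2; omega
          all_goals omega
        rw [if_neg hRL]
        split_ifs <;> omega
    · rcases Nat.eq_or_lt_of_le hi with hie | hlt
      · -- i = length
        have hb := ne_getD σ r hr (i-1) (by omega)
        have hlast := last_lt_iff σ r
        rw [← hie] at hlast
        rcases lt_or_gt_of_ne hb with hc | hc
        · -- r < getD (i-1)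
          have hRL : ¬ IsRL σ r i := by
            rintro (⟨_, h2⟩ | ⟨h1, _⟩ | ⟨_, h1, _⟩ | ⟨_, h1, _⟩ | ⟨_, h1, _⟩)
            · rw [hlast] at h2; omega
            all_goals omega
          rw [if_neg hRL]
          split_ifs <;> omega
        · have hRL : IsRL σ r i := Or.inl ⟨hie, by rw [hlast]; right; omega⟩
          rw [if_pos hRL]
          split_ifs <;> omega
      · -- 0 < i < length
        have ha := ne_getD σ r hr i hlt
        have hb := ne_getD σ r hr (i-1) (by omega)
        have hab := getD_ne σ hnd i hi0 hlt
        by_cases hRL : IsRL σ r i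
        · rw [if_pos hRL]
          rcases hRL with ⟨h1, _⟩ | ⟨h1, _⟩ | ⟨_, _, h3, h4⟩ | ⟨_, _, h3, h4⟩ | ⟨_, _, h3, h4⟩
          · omega
          · omega
          all_goals split_ifs <;> omega
        · rw [if_neg hRL]
          have h3 : ¬(r < σ.getD i 0 ∧ σ.getD i 0 < σ.getD (i-1) 0) :=
            fun hc => hRL (Or.inr (Or.inr (Or.inl ⟨hi0, hlt, hc.1, hc.2⟩)))
          have h4 : ¬(σ.getD i 0 < σ.getD (i-1) 0 ∧ σ.getD (i-1) 0 < r) :=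
            fun hc => hRL (Or.inr (Or.inr (Or.inr (Or.inl ⟨hi0, hlt, hc.1, hc.2⟩))))
          have h5 : ¬(σ.getD (i-1) 0 < r ∧ r < σ.getD i 0) :=
            fun hc => hRL (Or.inr (Or.inr (Or.inr (Or.inr ⟨hi0, hlt, hc.1, hc.2⟩))))
          split_ifs <;> omega

open Classical in
lemma point (σ : List ℕ) (r : ℕ) (hnd : σ.Nodup) (hr : r ∉ σ) (j : ℕ)
    (h1 : 1 ≤ j) (h2 : j ≤ σ.length) :
    ((if IsRL σ r j then 1 else 0) : ℕ) + Tf σ r (j+1) =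
    (if j ∈ descents σ then 1 else 0) + Tf σ r j := by
  rw [Tf, Tf]
  simp only [Nat.add_sub_cancel]
  have hdes : (if j ∈ descents σ then (1:ℕ) else 0)
      = if 0 < j ∧ j < σ.length ∧ σ.getD j 0 < σ.getD (j-1) 0 then 1 else 0 := by
    by_cases h : j ∈ descents σ
    · rw [if_pos h, if_pos ((mem_descents_iff σ j).1 h)]
    · rw [if_neg h, if_neg (fun hc => h ((mem_descents_iff σ j).2 hc))]
  rw [hdes]
  have hb := ne_getD σ r hr (j-1) (by omega)
  rcases Nat.eq_or_lt_of_le h2 with hje | hlt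
  · -- j = length
    have hlast := last_lt_iff σ r
    rw [← hje] at hlast
    rcases lt_or_gt_of_ne hb with hc | hc
    · have hRL : ¬ IsRL σ r j := by
        rintro (⟨_, h2'⟩ | ⟨h1', _⟩ | ⟨_, h1', _⟩ | ⟨_, h1', _⟩ | ⟨_, h1', _⟩)
        · rw [hlast] at h2'; omega
        all_goals omega
      rw [if_neg hRL]
      split_ifs <;> omega
    · have hRL : IsRL σ r j := Or.inl ⟨hje, by rw [hlast]; right; omega⟩
      rw [if_pos hRL]
      split_ifs <;> omega
  · have ha := ne_getD σ r hr j hlt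
    have hab := getD_ne σ hnd j h1 hlt
    by_cases hRL : IsRL σ r j
    · rw [if_pos hRL]
      rcases hRL with ⟨h1', _⟩ | ⟨h1', _⟩ | ⟨_, _, h3, h4⟩ | ⟨_, _, h3, h4⟩ | ⟨_, _, h3, h4⟩
      · omega
      · omega
      all_goals split_ifs <;> omega
    · rw [if_neg hRL]
      have h3 : ¬(r < σ.getD j 0 ∧ σ.getD j 0 < σ.getD (j-1) 0) :=
        fun hc => hRL (Or.inr (Or.inr (Or.inl ⟨h1, hlt, hc.1, hc.2⟩)))
      have h4 : ¬(σ.getD j 0 < σ.getD (j-1) 0 ∧ σ.getD (j-1) 0 < r) :=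
        fun hc => hRL (Or.inr (Or.inr (Or.inr (Or.inl ⟨h1, hlt, hc.1, hc.2⟩))))
      have h5 : ¬(σ.getD (j-1) 0 < r ∧ r < σ.getD j 0) :=
        fun hc => hRL (Or.inr (Or.inr (Or.inr (Or.inr ⟨h1, hlt, hc.1, hc.2⟩))))
      split_ifs <;> omega

open Classical in
lemma point0 (σ : List ℕ) (r : ℕ) (hr : r ∉ σ) :
    ((if IsRL σ r 0 then 1 else 0) : ℕ) + Tf σ r 1 = 1 := by
  rw [Tf]
  rcases Nat.eq_zero_or_pos σ.length with hn0 | hn0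
  · have hRL : IsRL σ r 0 := Or.inl ⟨by omega, by rw [last_lt_iff]; left; exact hn0⟩
    rw [if_pos hRL]
    split_ifs <;> omega
  · have hb := ne_getD σ r hr 0 (by omega)
    rcases lt_or_gt_of_ne hb with hc | hc
    · have hRL : IsRL σ r 0 := Or.inr (Or.inl ⟨rfl, by rw [head_lt_iff]; right; exact hc⟩)
      rw [if_pos hRL]
      split_ifs <;> simp_all <;> omega
    · have hRL : ¬ IsRL σ r 0 := by
        rintro (⟨h1, _⟩ | ⟨_, h2⟩ | ⟨h1, _⟩ | ⟨h1, _⟩ | ⟨h1, _⟩)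
        · omega
        · rw [head_lt_iff] at h2; omega
        all_goals omega
      rw [if_neg hRL]
      split_ifs <;> simp_all <;> omega

noncomputable def rlb (σ : List ℕ) (r : ℕ) (j : ℕ) : Bool :=
  @decide (IsRL σ r j) (Classical.propDecidable _)

lemma rlb_true {σ : List ℕ} {r j : ℕ} (h : IsRL σ r j) : rlb σ r j = true := by
  rw [rlb]; exact @decide_eq_true _ (Classical.propDecidable _) h

lemma rlb_false {σ : List ℕ} {r j : ℕ} (h : ¬ IsRL σ r j) : rlb σ r j = false := by
  rw [rlb]; exact @decide_eq_false _ (Classical.propDecidable _) h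

lemma rlb_iff {σ : List ℕ} {r j : ℕ} : rlb σ r j = true ↔ IsRL σ r j := by
  rw [rlb]; exact @decide_eq_true_iff _ (Classical.propDecidable _)

lemma dge_succ (σ : List ℕ) (s : ℕ) :
    dge s σ = dge (s+1) σ + (if s ∈ descents σ then 1 else 0) := by
  rw [dge, dge, Finset.card_filter, Finset.card_filter]
  have : ∀ j ∈ descents σ, (if s ≤ j then (1:ℕ) else 0)
      = (if s + 1 ≤ j then 1 else 0) + (if j = s then 1 else 0) := by
    intro j _; split_ifs <;> omega
  rw [Finset.sum_congr rfl this, Finset.sum_add_distrib, Finset.sum_ite_eq' (descents σ) s]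

lemma range_split' (a b : ℕ) (h : a ≤ b) :
    List.range b = List.range' 0 a ++ List.range' a (b - a) := by
  obtain ⟨c, rfl⟩ := Nat.exists_eq_add_of_le h
  rw [Nat.add_sub_cancel_left]
  have := List.range'_append (s := 0) (m := a) (n := c) (step := 1)
  simp only [one_mul, zero_add] at this
  rw [range_eq_range', ← this]

lemma countC (σ : List ℕ) (r : ℕ) (hnd : σ.Nodup) (hr : r ∉ σ) :
    ∀ (m s : ℕ), m + s = σ.length + 1 → 1 ≤ s →
    (List.range' s m).countP (rlb σ r) = dge s σ + Tf σ r s := by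
  intro m
  induction m with
  | zero =>
    intro s hms _
    have hs : s = σ.length + 1 := by omega
    subst hs
    have h1 : dge (σ.length + 1) σ = 0 := by
      rw [dge, Finset.card_eq_zero, Finset.filter_eq_empty_iff]
      intro j hj
      rw [mem_descents_iff] at hj
      omega
    have h2 : Tf σ r (σ.length + 1) = 0 := by
      rw [Tf, if_neg]; rintro ⟨h, _⟩; omega
    simp [h1, h2]
  | succ m ih =>
    intro s hms hs1
    rw [List.range'_succ, List.countP_cons]
    have hIH := ih (s+1) (by omega) (by omega)
    have hpt := point σ r hnd hr s hs1 (by omega)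
    have hdg := dge_succ σ s
    by_cases hRL : IsRL σ r s
    · rw [rlb_true hRL, if_pos rfl]
      rw [if_pos hRL] at hpt
      omega
    · rw [rlb_false hRL]
      simp only [Bool.false_eq_true, if_false, add_zero]
      rw [if_neg hRL] at hpt
      omega

lemma Ctot (σ : List ℕ) (r : ℕ) (hnd : σ.Nodup) (hr : r ∉ σ) :
    (List.range (σ.length + 1)).countP (rlb σ r) = des σ + 1 := by
  have h0 : List.range (σ.length + 1) = 0 :: List.range' 1 σ.length := by
    rw [range_eq_range']
    rw [List.range'_succ]
  rw [h0, List.countP_cons, countC σ r hnd hr σ.length 1 (by omega) le_rfl]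
  have hdg : dge 1 σ = des σ := by
    rw [dge, des, Finset.filter_true_of_mem]
    intro j hj
    rw [mem_descents_iff] at hj
    omega
  have hpt := point0 σ r hr
  by_cases hRL : IsRL σ r 0
  · rw [rlb_true hRL, if_pos rfl]
    rw [if_pos hRL] at hpt
    omega
  · rw [rlb_false hRL]
    rw [if_neg hRL] at hpt
    simp only [Bool.false_eq_true, if_false, add_zero]
    omega

lemma valR (σ : List ℕ) (r : ℕ) (hnd : σ.Nodup) (hr : r ∉ σ) (i : ℕ) (hi : i ≤ σ.length)
    (hRL : IsRL σ r i) :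
    im σ i r =
      (((List.range (σ.length + 1)).filter (rlb σ r)).countP (fun j => decide (i < j)) : ℤ) := by
  rw [List.countP_filter, range_split' (i+1) (σ.length+1) (by omega), List.countP_append]
  have hz : (List.range' 0 (i+1)).countP (fun a => decide (i < a) && rlb σ r a) = 0 := by
    rw [List.countP_eq_zero]
    intro a ha
    rw [List.mem_range'_1] at ha
    simp only [Bool.and_eq_true, decide_eq_true_iff]
    rintro ⟨h, _⟩; omega
  have hc : (List.range' (i+1) (σ.length+1-(i+1))).countP (fun a => decide (i < a) && rlb σ r a)
      = (List.range' (i+1) (σ.length+1-(i+1))).countP (rlb σ r) := by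
    apply List.countP_congr
    intro x hx
    rw [List.mem_range'_1] at hx
    simp only [Bool.and_eq_true, decide_eq_true_iff]
    constructor
    · rintro ⟨_, h⟩; exact h
    · intro h; exact ⟨by omega, h⟩
  rw [hz, hc, countC σ r hnd hr _ (i+1) (by omega) (by omega)]
  rw [key1 σ r hnd hr i hi, if_pos hRL]
  push_cast
  ring

lemma valN (σ : List ℕ) (r : ℕ) (hnd : σ.Nodup) (hr : r ∉ σ) (i : ℕ) (hi : i ≤ σ.length)
    (hRL : ¬ IsRL σ r i) :
    im σ i r = (des σ + 1 : ℤ) +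
      (((List.range (σ.length + 1)).filter (fun j => ! rlb σ r j)).countP
        (fun j => decide (j < i)) : ℤ) := by
  have hsplit1 : (List.range (σ.length+1)).countP (rlb σ r)
      = (List.range' 0 i).countP (rlb σ r) + (List.range' i (σ.length+1-i)).countP (rlb σ r) := by
    rw [range_split' i (σ.length+1) (by omega), List.countP_append]
  have h2 : (List.range' i (σ.length+1-i)).countP (rlb σ r)
      = (if rlb σ r i = true then 1 else 0) + (List.range' (i+1) (σ.length-i)).countP (rlb σ r) := by
    rw [show σ.length + 1 - i = (σ.length - i) + 1 from by omega, List.range'_succ,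
      List.countP_cons]
    omega
  rw [rlb_false hRL] at h2
  simp only [Bool.false_eq_true, if_false, zero_add] at h2
  have h3 := countC σ r hnd hr (σ.length - i) (i+1) (by omega) (by omega)
  have h4 := Ctot σ r hnd hr
  -- the non-RL count below i
  have h5 : ((List.range (σ.length + 1)).filter (fun j => ! rlb σ r j)).countP
        (fun j => decide (j < i))
      = (List.range' 0 i).countP (fun j => ! rlb σ r j) := by
    rw [List.countP_filter, range_split' i (σ.length+1) (by omega), List.countP_append]
    have hz : (List.range' i (σ.length+1-i)).countP (fun a => decide (a < i) && ! rlb σ r a) = 0 := by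
      rw [List.countP_eq_zero]
      intro a ha
      rw [List.mem_range'_1] at ha
      simp only [Bool.and_eq_true, decide_eq_true_iff]
      rintro ⟨h, _⟩; omega
    have hc : (List.range' 0 i).countP (fun a => decide (a < i) && ! rlb σ r a)
        = (List.range' 0 i).countP (fun j => ! rlb σ r j) := by
      apply List.countP_congr
      intro x hx
      rw [List.mem_range'_1] at hx
      simp only [Bool.and_eq_true, decide_eq_true_iff]
      constructor
      · rintro ⟨_, h⟩; exact h
      · intro h; exact ⟨by omega, h⟩
    rw [hz, hc, add_zero]
  have h6 : (List.range' 0 i).countP (rlb σ r)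
      + (List.range' 0 i).countP (fun j => ! rlb σ r j) = i := by
    have := List.length_eq_countP_add_countP (rlb σ r) (l := List.range' 0 i)
    rw [List.length_range'] at this
    have he : (List.range' 0 i).countP (fun a => decide ¬ rlb σ r a = true)
        = (List.range' 0 i).countP (fun j => ! rlb σ r j) := by
      apply List.countP_congr
      intro x _
      cases h : rlb σ r x <;> simp
    omega
  rw [key1 σ r hnd hr i hi, if_neg hRL, h5]
  have hTf : Tf σ r (i+1) = Tf σ r (i+1) := rfl
  -- combine : im = i + dge(i+1) + Tf(i+1); h3: countP range'(i+1) = dge(i+1)+Tf(i+1)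
  have hfin : (i : ℤ) + (dge (i+1) σ : ℤ) + (Tf σ r (i+1) : ℤ)
      = (des σ + 1 : ℤ) + ((List.range' 0 i).countP (fun j => ! rlb σ r j) : ℤ) := by
    have hz1 : (List.range' (i+1) (σ.length-i)).countP (rlb σ r) = dge (i+1) σ + Tf σ r (i+1) := h3
    push_cast
    omega
  push_cast
  push_cast at hfin
  linarith [hfin]

lemma cast_list_eq (l : List ℕ) : (l.map (fun j => (j : ℤ))) = List.map (fun j : ℕ => (j : ℤ)) l := by
  induction l with
  | nil => rfl
  | cons a t ih => simp_all

lemma Ldec : ∀ (l : List ℕ), l.Pairwise (· < ·) →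
    l.map (fun i => (l.countP (fun j => decide (i < j)) : ℤ))
      = (List.map (fun j : ℕ => (j:ℤ)) (List.range l.length)).reverse := by
  intro l
  induction l with
  | nil => simp
  | cons x xs ih =>
    intro hp
    rw [List.pairwise_cons] at hp
    obtain ⟨hx, hp'⟩ := hp
    rw [List.map_cons]
    have hhead : (x :: xs).countP (fun j => decide (x < j)) = xs.length := by
      rw [List.countP_cons, if_neg (by simp), add_zero]
      exact List.countP_eq_length.2 (fun a ha => by simpa using hx a ha)
    have htail : xs.map (fun i => (((x :: xs).countP (fun j => decide (i < j)) : ℕ) : ℤ))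
        = xs.map (fun i => ((xs.countP (fun j => decide (i < j)) : ℕ) : ℤ)) := by
      apply List.map_congr_left
      intro a ha
      rw [List.countP_cons, if_neg (by simpa using Nat.lt_asymm (hx a ha)), add_zero]
    rw [hhead, htail, ih hp', List.length_cons, List.range_succ, List.map_append,
      List.reverse_append]
    simp

lemma Linc : ∀ (l : List ℕ), l.Pairwise (· < ·) →
    l.map (fun i => (l.countP (fun j => decide (j < i)) : ℤ))
      = List.map (fun j : ℕ => (j:ℤ)) (List.range l.length) := by
  intro l
  induction l with
  | nil => simp
  | cons x xs ih =>
    intro hp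
    rw [List.pairwise_cons] at hp
    obtain ⟨hx, hp'⟩ := hp
    rw [List.map_cons]
    have hhead : (x :: xs).countP (fun j => decide (j < x)) = 0 := by
      rw [List.countP_eq_zero]
      intro a ha
      rcases List.mem_cons.1 ha with h | h
      · subst h; simp
      · simpa using Nat.lt_asymm (hx a h)
    have htail : xs.map (fun i => (((x :: xs).countP (fun j => decide (j < i)) : ℕ) : ℤ))
        = xs.map (fun i => ((xs.countP (fun j => decide (j < i)) : ℕ) : ℤ) + 1) := by
      apply List.map_congr_left
      intro a ha
      rw [List.countP_cons, if_pos (by simpa using hx a ha)]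
      push_cast
      ring
    rw [hhead, htail, List.length_cons, List.range_succ_eq_map, List.map_cons]
    congr 1
    have h1 : xs.map (fun i => ((xs.countP (fun j => decide (j < i)) : ℕ) : ℤ) + 1)
        = (xs.map (fun i => ((xs.countP (fun j => decide (j < i)) : ℕ) : ℤ))).map (fun z => z + 1) := by
      rw [List.map_map]; rfl
    rw [h1, ih hp', List.map_map, List.map_map]
    apply List.map_congr_left
    intro a _
    simp [Nat.succ_eq_add_one]

/-- The major increment sequence `MIS(σ,r)` is a shuffle of the increasing sequence
`k+1, …, n` and the decreasing sequence `k, k-1, …, 1, 0`, where `k = des σ`. -/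
theorem mis_is_shuffle (n k : ℕ) (σ : List ℕ) (hσl : σ.length = n) (hσnd : σ.Nodup)
    (hk : des σ = k) (r : ℕ) (hr : r ∉ σ) :
    letI MIS : List ℤ := (List.range (n + 1)).map (fun i => im σ i r)
    MIS.Perm ((List.range (n + 1)).map (fun j => (j : ℤ))) ∧
    (((List.range (n + 1)).map (fun j => (j : ℤ))).drop (k + 1)) <+ MIS ∧
    (((List.range (k + 1)).map (fun j => (j : ℤ))).reverse) <+ MIS := by
  subst hσl
  subst hk
  simp only [cast_list_eq]
  set f : ℕ → ℤ := fun i => im σ i r with hf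
  set lR := (List.range (σ.length + 1)).filter (rlb σ r) with hlR
  set lN := (List.range (σ.length + 1)).filter (fun j => ! rlb σ r j) with hlN
  have hsubR : lR <+ List.range (σ.length + 1) := List.filter_sublist
  have hsubN : lN <+ List.range (σ.length + 1) := List.filter_sublist
  have hpR : lR.Pairwise (· < ·) := List.Pairwise.sublist hsubR List.pairwise_lt_range
  have hpN : lN.Pairwise (· < ·) := List.Pairwise.sublist hsubN List.pairwise_lt_range
  have hlenR : lR.length = des σ + 1 := by
    rw [hlR, ← List.countP_eq_length_filter]; exact Ctot σ r hσnd hr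
  have hkn : des σ ≤ σ.length := by
    have h := List.countP_le_length (p := rlb σ r) (l := List.range (σ.length + 1))
    rw [Ctot σ r hσnd hr, List.length_range] at h; omega
  have hlenN : lN.length = σ.length - des σ := by
    rw [hlN, ← List.countP_eq_length_filter]
    have hl := List.length_eq_countP_add_countP (rlb σ r) (l := List.range (σ.length + 1))
    have he : (List.range (σ.length + 1)).countP (fun a => decide ¬ rlb σ r a = true)
        = (List.range (σ.length + 1)).countP (fun j => ! rlb σ r j) := by
      apply List.countP_congr; intro x _; cases h : rlb σ r x <;> simp
    rw [List.length_range, Ctot σ r hσnd hr, he] at hl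
    omega
  have hmapR : lR.map f = (List.map (fun j : ℕ => (j:ℤ)) (List.range (des σ + 1))).reverse := by
    have h1 : lR.map f = lR.map (fun i => (lR.countP (fun j => decide (i < j)) : ℤ)) := by
      apply List.map_congr_left
      intro a ha
      rw [hlR, List.mem_filter, List.mem_range] at ha
      exact valR σ r hσnd hr a (by omega) (rlb_iff.1 ha.2)
    rw [h1, Ldec lR hpR, hlenR]
  have hmapN : lN.map f
      = (List.map (fun j : ℕ => (j:ℤ)) (List.range (σ.length - des σ))).map
          (fun z => (des σ + 1 : ℤ) + z) := by
    have h1 : lN.map f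
        = lN.map (fun i => (des σ + 1 : ℤ) + (lN.countP (fun j => decide (j < i)) : ℤ)) := by
      apply List.map_congr_left
      intro a ha
      rw [hlN, List.mem_filter, List.mem_range] at ha
      have hnotRL : ¬ IsRL σ r a := by
        intro h
        rw [rlb_true h] at ha
        simp at ha
      exact valN σ r hσnd hr a (by omega) hnotRL
    have h2 : lN.map (fun i => (des σ + 1 : ℤ) + (lN.countP (fun j => decide (j < i)) : ℤ))
        = (lN.map (fun i => (lN.countP (fun j => decide (j < i)) : ℤ))).map
            (fun z => (des σ + 1 : ℤ) + z) := by
      rw [List.map_map]; rfl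
    rw [h1, h2, Linc lN hpN, hlenN]
  have hdecomp : List.map (fun j : ℕ => (j:ℤ)) (List.range (σ.length + 1))
      = List.map (fun j : ℕ => (j:ℤ)) (List.range (des σ + 1))
        ++ (List.map (fun j : ℕ => (j:ℤ)) (List.range (σ.length - des σ))).map
            (fun z => (des σ + 1 : ℤ) + z) := by
    rw [show σ.length + 1 = (des σ + 1) + (σ.length - des σ) from by omega, List.range_add,
      List.map_append]
    congr 1
    rw [List.map_map, List.map_map]
    apply List.map_congr_left
    intro a _
    simp
  refine ⟨?_, ?_, ?_⟩
  · have hperm1 : (lR ++ lN).map f ~ (List.range (σ.length + 1)).map f :=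
      (List.filter_append_perm _ _).map f
    rw [List.map_append, hmapR, hmapN] at hperm1
    calc (List.range (σ.length + 1)).map f
        ~ _ := hperm1.symm
      _ ~ List.map (fun j : ℕ => (j:ℤ)) (List.range (des σ + 1))
            ++ (List.map (fun j : ℕ => (j:ℤ)) (List.range (σ.length - des σ))).map
                (fun z => (des σ + 1 : ℤ) + z) :=
          List.Perm.append (List.reverse_perm _) (List.Perm.refl _)
      _ = _ := hdecomp.symm
  · rw [hdecomp, List.drop_left'
      (by simp : (List.map (fun j : ℕ => (j:ℤ)) (List.range (des σ + 1))).length = des σ + 1),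
      ← hmapN]
    exact List.Sublist.map f hsubN
  · rw [← hmapR]
    exact List.Sublist.map f hsubR
end
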